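/- arXiv:1103.0991 — 8 statements merged into one kernel-verified Lean document; each statement's English description precedes it below -/
import Mathlib

section
/- Let X be a real Hilbert space, let A : X ⇉ X be a maximally monotone operator, let (x,u) ∈ X × X, and let C and D be closed affine subspaces of X such that D − D = (C − C)^⊥. Let (x_n, u_n)_{n∈ℕ} be a sequence in the graph of A such that (x_n, u_n) converges weakly to (x,u) and (x_n, u_n) − P_{C×D}(x_n, u_n) → 0 in norm. Then (x,u) ∈ (C × D) ∩ gra A and ⟨x_n, u_n⟩ → ⟨x, u⟩. -/
open Filter Topology RealInnerProductSpace

/-- A subset of `X × X`, viewed as the graph of a set-valued operator, is monotone. -/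
def MonotoneGraph {X : Type*} [NormedAddCommGroup X] [InnerProductSpace ℝ X]
    (A : Set (X × X)) : Prop :=
  ∀ p ∈ A, ∀ q ∈ A, (0 : ℝ) ≤ ⟪p.1 - q.1, p.2 - q.2⟫

/-- A monotone graph is maximally monotone if it is not properly contained in the graph of
another monotone operator. -/
def MaximalMonotoneGraph {X : Type*} [NormedAddCommGroup X] [InnerProductSpace ℝ X]
    (A : Set (X × X)) : Prop :=
  MonotoneGraph A ∧ ∀ B : Set (X × X), MonotoneGraph B → A ⊆ B → B = A

/-- A weakly convergent sequence is norm-bounded (Banach–Steinhaus). -/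
lemma bdd_of_weak' {X : Type*} [NormedAddCommGroup X] [InnerProductSpace ℝ X] [CompleteSpace X]
    (zn : ℕ → X) (z : X)
    (h : ∀ w : X, Tendsto (fun n => ⟪zn n, w⟫) atTop (𝓝 ⟪z, w⟫)) :
    ∃ M : ℝ, ∀ n, ‖zn n‖ ≤ M := by
  have key : ∀ w : X, ∃ C : ℝ, ∀ n : ℕ, ‖(innerSL ℝ (zn n)) w‖ ≤ C := by
    intro w
    have h1 : Tendsto (fun n => ‖⟪zn n, w⟫‖) atTop (𝓝 ‖⟪z, w⟫‖) := (h w).norm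
    obtain ⟨C, hC⟩ := h1.bddAbove_range
    exact ⟨C, fun n => hC (Set.mem_range_self n)⟩
  obtain ⟨M, hM⟩ := banach_steinhaus key
  refine ⟨M, fun n => ?_⟩
  simpa [innerSL_apply_norm] using hM n

/-- A closed affine subspace is weakly sequentially closed. -/
lemma mem_of_weak' {X : Type*} [NormedAddCommGroup X] [InnerProductSpace ℝ X] [CompleteSpace X]
    (S : AffineSubspace ℝ X) (hSne : (S : Set X).Nonempty) (hScl : IsClosed (S : Set X))
    (zn : ℕ → X) (hz : ∀ n, zn n ∈ S) (z : X)
    (h : ∀ w : X, Tendsto (fun n => ⟪zn n, w⟫) atTop (𝓝 ⟪z, w⟫)) :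
    z ∈ S := by
  obtain ⟨c, hc⟩ := hSne
  have hdircl : IsClosed (S.direction : Set X) := S.isClosed_direction_iff.mpr hScl
  haveI : CompleteSpace S.direction := hdircl.completeSpace_coe
  have hmem : z - c ∈ S.direction := by
    rw [← Submodule.orthogonal_orthogonal S.direction]
    intro w hw
    have heq : ∀ n : ℕ, ⟪w, zn n - c⟫ = (0 : ℝ) := by
      intro n
      have hd : zn n - c ∈ S.direction := by
        rw [← vsub_eq_sub]
        exact AffineSubspace.vsub_mem_direction (hz n) hc
      rw [real_inner_comm]
      exact hw _ hd
    have hlim : Tendsto (fun n => ⟪w, zn n - c⟫) atTop (𝓝 ⟪w, z - c⟫) := by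
      have h1 : Tendsto (fun n => ⟪zn n, w⟫ - ⟪c, w⟫) atTop (𝓝 (⟪z, w⟫ - ⟪c, w⟫)) :=
        (h w).sub tendsto_const_nhds
      have h2 : Tendsto (fun n => ⟪w, zn n - c⟫) atTop (𝓝 (⟪z, w⟫ - ⟪c, w⟫)) :=
        h1.congr fun n => by rw [inner_sub_right, real_inner_comm w (zn n), real_inner_comm w c]
      have h3 : ⟪z, w⟫ - ⟪c, w⟫ = ⟪w, z - c⟫ := by rw [inner_sub_right, real_inner_comm w z, real_inner_comm w c]
      rwa [h3] at h2
    have h0 : Tendsto (fun n : ℕ => ⟪w, zn n - c⟫) atTop (𝓝 (0 : ℝ)) := by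
      simp only [heq]; exact tendsto_const_nhds
    exact tendsto_nhds_unique hlim h0
  have : z -ᵥ c ∈ S.direction := by rwa [vsub_eq_sub]
  exact (AffineSubspace.vsub_right_mem_direction_iff_mem hc z).mp this

theorem demiclosedness_via_two_affine_subspaces
    {X : Type*} [NormedAddCommGroup X] [InnerProductSpace ℝ X] [CompleteSpace X]
    (A : Set (X × X)) (hA : MaximalMonotoneGraph A)
    (x u : X) (C D : AffineSubspace ℝ X)
    (hCne : (C : Set X).Nonempty) (hDne : (D : Set X).Nonempty)
    (hCcl : IsClosed (C : Set X)) (hDcl : IsClosed (D : Set X))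
    (hdir : D.direction = C.directionᗮ)
    (PC PD : X → X)
    (hPC : ∀ w : X, PC w ∈ C ∧ ∀ v ∈ C, ‖w - PC w‖ ≤ ‖w - v‖)
    (hPD : ∀ w : X, PD w ∈ D ∧ ∀ v ∈ D, ‖w - PD w‖ ≤ ‖w - v‖)
    (xn un : ℕ → X) (hgra : ∀ n, (xn n, un n) ∈ A)
    (hxweak : ∀ w : X, Tendsto (fun n => ⟪xn n, w⟫) atTop (𝓝 ⟪x, w⟫))
    (huweak : ∀ w : X, Tendsto (fun n => ⟪un n, w⟫) atTop (𝓝 ⟪u, w⟫))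
    (hproj : Tendsto (fun n => (xn n - PC (xn n), un n - PD (un n))) atTop
      (𝓝 ((0 : X), (0 : X)))) :
    x ∈ C ∧ u ∈ D ∧ (x, u) ∈ A ∧
      Tendsto (fun n => ⟪xn n, un n⟫) atTop (𝓝 ⟪x, u⟫) := by
  -- projections of the components of hproj
  have hax : Tendsto (fun n => xn n - PC (xn n)) atTop (𝓝 0) :=
    (continuous_fst.tendsto _).comp hproj
  have hbu : Tendsto (fun n => un n - PD (un n)) atTop (𝓝 0) :=
    (continuous_snd.tendsto _).comp hproj
  -- weak convergence of the projected sequences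
  have hPCweak : ∀ w : X, Tendsto (fun n => ⟪PC (xn n), w⟫) atTop (𝓝 ⟪x, w⟫) := by
    intro w
    have h1 : Tendsto (fun n => ⟪xn n - PC (xn n), w⟫) atTop (𝓝 (0 : ℝ)) := by
      have := Filter.Tendsto.inner (𝕜 := ℝ) hax (tendsto_const_nhds (x := w))
      simpa using this
    have h2 := (hxweak w).sub h1
    rw [sub_zero] at h2
    refine h2.congr fun n => ?_
    rw [inner_sub_left]; ring
  have hPDweak : ∀ w : X, Tendsto (fun n => ⟪PD (un n), w⟫) atTop (𝓝 ⟪u, w⟫) := by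
    intro w
    have h1 : Tendsto (fun n => ⟪un n - PD (un n), w⟫) atTop (𝓝 (0 : ℝ)) := by
      have := Filter.Tendsto.inner (𝕜 := ℝ) hbu (tendsto_const_nhds (x := w))
      simpa using this
    have h2 := (huweak w).sub h1
    rw [sub_zero] at h2
    refine h2.congr fun n => ?_
    rw [inner_sub_left]; ring
  have hx : x ∈ C := mem_of_weak' C hCne hCcl (fun n => PC (xn n)) (fun n => (hPC (xn n)).1) x hPCweak
  have hu : u ∈ D := mem_of_weak' D hDne hDcl (fun n => PD (un n)) (fun n => (hPD (un n)).1) u hPDweak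
  -- boundedness
  obtain ⟨Mx, hMx⟩ := bdd_of_weak' xn x hxweak
  obtain ⟨Mu, hMu⟩ := bdd_of_weak' un u huweak
  obtain ⟨Ma, hMa⟩ : ∃ Ma : ℝ, ∀ n, ‖xn n - PC (xn n)‖ ≤ Ma := by
    obtain ⟨Ma, hMa⟩ := (hax.norm.congr (fun n => rfl)).bddAbove_range
    exact ⟨Ma, fun n => hMa (Set.mem_range_self n)⟩
  -- orthogonality of the directional parts
  have horth : ∀ n, ⟪PC (xn n) - x, PD (un n) - u⟫ = 0 := by
    intro n
    have hp : PC (xn n) - x ∈ C.direction := by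
      rw [← vsub_eq_sub]; exact AffineSubspace.vsub_mem_direction (hPC (xn n)).1 hx
    have hq : PD (un n) - u ∈ D.direction := by
      rw [← vsub_eq_sub]; exact AffineSubspace.vsub_mem_direction (hPD (un n)).1 hu
    rw [hdir] at hq
    exact Submodule.inner_right_of_mem_orthogonal hp hq
  -- the key limit
  have t1 : Tendsto (fun n => ⟪xn n - PC (xn n), un n - u⟫) atTop (𝓝 0) := by
    refine squeeze_zero_norm (a := fun n => ‖xn n - PC (xn n)‖ * (Mu + ‖u‖)) (fun n => ?_) ?_
    · calc ‖⟪xn n - PC (xn n), un n - u⟫‖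
          ≤ ‖xn n - PC (xn n)‖ * ‖un n - u‖ := norm_inner_le_norm _ _
        _ ≤ ‖xn n - PC (xn n)‖ * (Mu + ‖u‖) := by
            apply mul_le_mul_of_nonneg_left _ (norm_nonneg _)
            calc ‖un n - u‖ ≤ ‖un n‖ + ‖u‖ := norm_sub_le _ _
              _ ≤ Mu + ‖u‖ := by linarith [hMu n]
    · simpa using hax.norm.mul_const (Mu + ‖u‖)
  have t2 : Tendsto (fun n => ⟪PC (xn n) - x, un n - PD (un n)⟫) atTop (𝓝 0) := by
    refine squeeze_zero_norm (a := fun n => (Mx + Ma + ‖x‖) * ‖un n - PD (un n)‖) (fun n => ?_) ?_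
    · calc ‖⟪PC (xn n) - x, un n - PD (un n)⟫‖
          ≤ ‖PC (xn n) - x‖ * ‖un n - PD (un n)‖ := norm_inner_le_norm _ _
        _ ≤ (Mx + Ma + ‖x‖) * ‖un n - PD (un n)‖ := by
            apply mul_le_mul_of_nonneg_right _ (norm_nonneg _)
            have h1 : ‖PC (xn n) - x‖ ≤ ‖PC (xn n) - xn n‖ + ‖xn n - x‖ := by
              simpa using norm_sub_le_norm_sub_add_norm_sub (PC (xn n)) (xn n) x
            have h2 : ‖PC (xn n) - xn n‖ = ‖xn n - PC (xn n)‖ := by rw [norm_sub_rev]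
            have h3 : ‖xn n - x‖ ≤ ‖xn n‖ + ‖x‖ := norm_sub_le _ _
            linarith [hMa n, hMx n]
    · simpa using hbu.norm.const_mul (Mx + Ma + ‖x‖)
  have t3 : Tendsto (fun n => ⟪PC (xn n) - x, PD (un n) - u⟫) atTop (𝓝 0) := by
    simp only [horth]; exact tendsto_const_nhds
  have hkey : Tendsto (fun n => ⟪xn n - x, un n - u⟫) atTop (𝓝 0) := by
    have hsum := (t1.add t2).add t3
    rw [show (0 : ℝ) + 0 + 0 = 0 by ring] at hsum
    refine hsum.congr fun n => ?_
    simp only [inner_sub_left, inner_sub_right]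
    ring
  -- the inner product limit
  have h2 : Tendsto (fun n => ⟪x, un n⟫) atTop (𝓝 ⟪x, u⟫) := by
    simpa [real_inner_comm] using huweak x
  have hfinal : Tendsto (fun n => ⟪xn n, un n⟫) atTop (𝓝 ⟪x, u⟫) := by
    have hsum := ((hkey.add (hxweak u)).add h2).sub (tendsto_const_nhds (x := (⟪x, u⟫ : ℝ)))
    rw [show (0 : ℝ) + ⟪x, u⟫ + ⟪x, u⟫ - ⟪x, u⟫ = ⟪x, u⟫ by ring] at hsum
    refine hsum.congr fun n => ?_
    simp only [inner_sub_left, inner_sub_right]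
    ring
  -- limit of inner products against fixed graph points
  have hlimpt : ∀ y v : X, Tendsto (fun n => ⟪xn n - y, un n - v⟫) atTop
      (𝓝 ⟪x - y, u - v⟫) := by
    intro y v
    have hy : Tendsto (fun n => ⟪un n, y⟫) atTop (𝓝 ⟪u, y⟫) := huweak y
    have hsum := ((hfinal.sub (hxweak v)).sub hy).add
      (tendsto_const_nhds (x := (⟪y, v⟫ : ℝ)))
    rw [show ⟪x, u⟫ - ⟪x, v⟫ - ⟪u, y⟫ + ⟪y, v⟫ = ⟪x - y, u - v⟫ by
      simp only [inner_sub_left, inner_sub_right]; rw [real_inner_comm u y]; ring] at hsum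
    refine hsum.congr fun n => ?_
    simp only [inner_sub_left, inner_sub_right]
    rw [real_inner_comm (un n) y]
    ring
  -- maximality gives membership
  have hmem : (x, u) ∈ A := by
    have hB : MonotoneGraph (insert (x, u) A) := by
      rintro p hp q hq
      rcases Set.mem_insert_iff.1 hp with rfl | hp <;>
        rcases Set.mem_insert_iff.1 hq with rfl | hq
      · simp
      · exact ge_of_tendsto' (hlimpt q.1 q.2) fun n => hA.1 _ (hgra n) q hq
      · have h0 : (0:ℝ) ≤ ⟪x - p.1, u - p.2⟫ :=
          ge_of_tendsto' (hlimpt p.1 p.2) fun n => hA.1 _ (hgra n) p hp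
        calc (0:ℝ) ≤ ⟪x - p.1, u - p.2⟫ := h0
          _ = ⟪p.1 - x, p.2 - u⟫ := by
              rw [← neg_sub x p.1, ← neg_sub u p.2, inner_neg_neg]
      · exact hA.1 p hp q hq
    have := hA.2 _ hB (Set.subset_insert _ _)
    rw [← this]
    exact Set.mem_insert _ _
  exact ⟨hx, hu, hmem, hfinal⟩
end

section
/- Let X be a real Hilbert space, let V be a closed linear subspace of X, let x, u ∈ X, and set C = x + V and D = u + V^⊥. Let (x_n)_{n∈ℕ} and (u_n)_{n∈ℕ} be sequences in X with x_n ⇀ x, u_n ⇀ u, x_n − P_C x_n → 0, and u_n − P_D u_n → 0. Then ⟨x_n, u_n⟩ → ⟨x, u⟩. -/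
open Filter Topology RealInnerProductSpace Pointwise

theorem inner_tendsto_of_weak_convergence_and_orthogonal_affine_asymptotics
    {X : Type*} [NormedAddCommGroup X] [InnerProductSpace ℝ X] [CompleteSpace X]
    (V : Submodule ℝ X) (hV : IsClosed (V : Set X))
    (x u : X) (C D : Set X)
    (hC : C = {x} + (V : Set X)) (hD : D = {u} + (Vᗮ : Set X))
    (PC PD : X → X)
    (hPC : ∀ w : X, PC w ∈ C ∧ ∀ v ∈ C, ‖w - PC w‖ ≤ ‖w - v‖)
    (hPD : ∀ w : X, PD w ∈ D ∧ ∀ v ∈ D, ‖w - PD w‖ ≤ ‖w - v‖)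
    (xn un : ℕ → X)
    (hxweak : ∀ w : X, Tendsto (fun n => ⟪xn n, w⟫) atTop (𝓝 ⟪x, w⟫))
    (huweak : ∀ w : X, Tendsto (fun n => ⟪un n, w⟫) atTop (𝓝 ⟪u, w⟫))
    (hxproj : Tendsto (fun n => xn n - PC (xn n)) atTop (𝓝 0))
    (huproj : Tendsto (fun n => un n - PD (un n)) atTop (𝓝 0)) :
    Tendsto (fun n => ⟪xn n, un n⟫) atTop (𝓝 ⟪x, u⟫) := by
  -- weak convergence implies boundedness via Banach–Steinhaus
  have bdd : ∀ (z : X) (zn : ℕ → X),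
      (∀ w : X, Tendsto (fun n => ⟪zn n, w⟫) atTop (𝓝 ⟪z, w⟫)) →
      ∃ Cb : ℝ, ∀ n, ‖zn n‖ ≤ Cb := by
    intro z zn hz
    have hpt : ∀ w : X, ∃ M : ℝ, ∀ n : ℕ, ‖(innerSL ℝ (zn n)) w‖ ≤ M := by
      intro w
      obtain ⟨M, hM⟩ := (hz w).norm.bddAbove_range
      exact ⟨M, fun n => hM ⟨n, rfl⟩⟩
    obtain ⟨Cb, hCb⟩ := banach_steinhaus hpt
    exact ⟨Cb, fun n => by simpa [innerSL_apply_norm] using hCb n⟩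
  obtain ⟨Cx, hCx⟩ := bdd x xn hxweak
  obtain ⟨Cu, hCu⟩ := bdd u un huweak
  -- bounds for the error terms (convergent sequences are bounded)
  obtain ⟨Bx, hBx⟩ := hxproj.norm.bddAbove_range
  obtain ⟨Bu, hBu⟩ := huproj.norm.bddAbove_range
  have hBx' : ∀ n, ‖xn n - PC (xn n)‖ ≤ Bx := fun n => hBx ⟨n, rfl⟩
  have hBu' : ∀ n, ‖un n - PD (un n)‖ ≤ Bu := fun n => hBu ⟨n, rfl⟩
  -- memberships
  have hvn : ∀ n, PC (xn n) - x ∈ V := by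
    intro n
    have h := (hPC (xn n)).1
    rw [hC] at h
    obtain ⟨a, ha, b, hb, hab⟩ := h
    simp only [Set.mem_singleton_iff] at ha
    subst ha
    simpa [← hab] using hb
  have hwn : ∀ n, PD (un n) - u ∈ Vᗮ := by
    intro n
    have h := (hPD (un n)).1
    rw [hD] at h
    obtain ⟨a, ha, b, hb, hab⟩ := h
    simp only [Set.mem_singleton_iff] at ha
    subst ha
    simpa [← hab] using hb
  -- norm bounds on the projected parts
  have hna : ∀ n, ‖PC (xn n) - x‖ ≤ Cx + ‖x‖ + Bx := by
    intro n
    calc ‖PC (xn n) - x‖ = ‖(xn n - x) - (xn n - PC (xn n))‖ := by congr 1; abel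
      _ ≤ ‖xn n - x‖ + ‖xn n - PC (xn n)‖ := norm_sub_le _ _
      _ ≤ (‖xn n‖ + ‖x‖) + ‖xn n - PC (xn n)‖ := by
          gcongr; exact norm_sub_le _ _
      _ ≤ (Cx + ‖x‖) + Bx := by gcongr <;> [exact hCx n; exact hBx' n]
      _ = Cx + ‖x‖ + Bx := by ring
  have hnc : ∀ n, ‖PD (un n) - u‖ ≤ Cu + ‖u‖ + Bu := by
    intro n
    calc ‖PD (un n) - u‖ = ‖(un n - u) - (un n - PD (un n))‖ := by congr 1; abel
      _ ≤ ‖un n - u‖ + ‖un n - PD (un n)‖ := norm_sub_le _ _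
      _ ≤ (‖un n‖ + ‖u‖) + ‖un n - PD (un n)‖ := by
          gcongr; exact norm_sub_le _ _
      _ ≤ (Cu + ‖u‖) + Bu := by gcongr <;> [exact hCu n; exact hBu' n]
      _ = Cu + ‖u‖ + Bu := by ring
  -- key: ⟪xn - x, un - u⟫ → 0
  have key : Tendsto (fun n => ⟪xn n - x, un n - u⟫) atTop (𝓝 0) := by
    have hdecomp : ∀ n, ⟪xn n - x, un n - u⟫
        = ⟪PC (xn n) - x, un n - PD (un n)⟫
          + ⟪xn n - PC (xn n), PD (un n) - u⟫
          + ⟪xn n - PC (xn n), un n - PD (un n)⟫ := by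
      intro n
      have horth : ⟪PC (xn n) - x, PD (un n) - u⟫ = 0 :=
        (Submodule.mem_orthogonal V (PD (un n) - u)).mp (hwn n) _ (hvn n)
      rw [show xn n - x = (PC (xn n) - x) + (xn n - PC (xn n)) from by abel,
          show un n - u = (PD (un n) - u) + (un n - PD (un n)) from by abel,
          inner_add_left, inner_add_right, inner_add_right, horth]
      ring
    rw [show (0:ℝ) = 0 + 0 + 0 by ring]
    simp only [hdecomp]
    refine Tendsto.add (Tendsto.add ?_ ?_) ?_
    · apply squeeze_zero_norm (a := fun n => (Cx + ‖x‖ + Bx) * ‖un n - PD (un n)‖)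
      · intro n
        calc ‖⟪PC (xn n) - x, un n - PD (un n)⟫‖
            ≤ ‖PC (xn n) - x‖ * ‖un n - PD (un n)‖ := norm_inner_le_norm _ _
          _ ≤ (Cx + ‖x‖ + Bx) * ‖un n - PD (un n)‖ :=
              mul_le_mul_of_nonneg_right (hna n) (norm_nonneg _)
      · simpa using (huproj.norm.const_mul (Cx + ‖x‖ + Bx))
    · apply squeeze_zero_norm (a := fun n => (Cu + ‖u‖ + Bu) * ‖xn n - PC (xn n)‖)
      · intro n
        calc ‖⟪xn n - PC (xn n), PD (un n) - u⟫‖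
            ≤ ‖xn n - PC (xn n)‖ * ‖PD (un n) - u‖ := norm_inner_le_norm _ _
          _ ≤ ‖xn n - PC (xn n)‖ * (Cu + ‖u‖ + Bu) :=
              mul_le_mul_of_nonneg_left (hnc n) (norm_nonneg _)
          _ = (Cu + ‖u‖ + Bu) * ‖xn n - PC (xn n)‖ := by ring
      · simpa using (hxproj.norm.const_mul (Cu + ‖u‖ + Bu))
    · apply squeeze_zero_norm (a := fun n => Bx * ‖un n - PD (un n)‖)
      · intro n
        calc ‖⟪xn n - PC (xn n), un n - PD (un n)⟫‖
            ≤ ‖xn n - PC (xn n)‖ * ‖un n - PD (un n)‖ := norm_inner_le_norm _ _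
          _ ≤ Bx * ‖un n - PD (un n)‖ :=
              mul_le_mul_of_nonneg_right (hBx' n) (norm_nonneg _)
      · simpa using (huproj.norm.const_mul Bx)
  -- combine
  have hfinal : ∀ n, ⟪xn n, un n⟫
      = ⟪xn n - x, un n - u⟫ + ⟪x, un n⟫ + ⟪xn n, u⟫ - ⟪x, u⟫ := by
    intro n
    simp only [inner_sub_left, inner_sub_right]
    ring
  have h1 : Tendsto (fun n => ⟪x, un n⟫) atTop (𝓝 ⟪x, u⟫) := by
    simpa [real_inner_comm] using huweak x
  have h2 : Tendsto (fun n => ⟪xn n, u⟫) atTop (𝓝 ⟪x, u⟫) := hxweak u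
  have hsum := ((key.add h1).add h2).sub_const ⟪x, u⟫
  simp only [hfinal]
  simpa using hsum
end

section
/- (Firm nonexpansiveness principle.) Let X be a real Hilbert space, let F : X → X be firmly nonexpansive, let (z_n)_{n∈ℕ} be a sequence in X converging weakly to z ∈ X, and suppose that F z_n ⇀ x ∈ X. Let C and D be closed affine subspaces of X such that D − D = (C − C)^⊥, and suppose that F z_n − P_C(F z_n) → 0 and (z_n − F z_n) − P_D(z_n − F z_n) → 0. Then x ∈ C, z ∈ x + D, and x = F z. -/
open Filter Topology RealInnerProductSpace Pointwise

/-- A sequence whose inner products against every vector converge is norm-bounded. -/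
lemma bdd_of_inner_tendsto
    {X : Type*} [NormedAddCommGroup X] [InnerProductSpace ℝ X] [CompleteSpace X]
    (e : ℕ → X) (h : ∀ w : X, Tendsto (fun n => ⟪e n, w⟫) atTop (𝓝 0)) :
    ∃ M : ℝ, ∀ n, ‖e n‖ ≤ M := by
  obtain ⟨M, hM⟩ := banach_steinhaus (g := fun n => innerSL ℝ (e n)) (fun w => by
    obtain ⟨B, hB⟩ := ((h w).norm.bddAbove_range)
    refine ⟨B, fun n => ?_⟩
    exact hB (Set.mem_range_self n))
  exact ⟨M, fun n => by simpa [innerSL_apply_norm] using hM n⟩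

/-- Weak limits of sequences norm-asymptotic to a nonempty closed affine subspace
belong to that subspace. -/
lemma mem_of_weak_affine
    {X : Type*} [NormedAddCommGroup X] [InnerProductSpace ℝ X] [CompleteSpace X]
    (S : AffineSubspace ℝ X) (hne : (S : Set X).Nonempty) (hcl : IsClosed (S : Set X))
    (y : X) (yn pn : ℕ → X) (hp : ∀ n, pn n ∈ S)
    (hdiff : Tendsto (fun n => yn n - pn n) atTop (𝓝 0))
    (hweak : ∀ w : X, Tendsto (fun n => ⟪yn n, w⟫) atTop (𝓝 ⟪y, w⟫)) : y ∈ S := by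
  obtain ⟨c, hc⟩ := hne
  have hdirc : IsClosed (S.direction : Set X) := S.isClosed_direction_iff.mpr hcl
  haveI : CompleteSpace S.direction := hdirc.completeSpace_coe
  have hmem : y - c ∈ S.directionᗮᗮ := by
    rw [Submodule.mem_orthogonal]
    intro u hu
    have h1 : Tendsto (fun n => ⟪yn n - c, u⟫) atTop (𝓝 ⟪y - c, u⟫) := by
      simp only [inner_sub_left]
      exact (hweak u).sub tendsto_const_nhds
    have h2 : ∀ n, ⟪yn n - c, u⟫ = ⟪yn n - pn n, u⟫ := by
      intro n
      have hd : pn n - c ∈ S.direction := by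
        simpa [vsub_eq_sub] using S.vsub_mem_direction (hp n) hc
      have : ⟪pn n - c, u⟫ = 0 := hu _ hd
      have hsplit : yn n - c = (yn n - pn n) + (pn n - c) := by abel
      rw [hsplit, inner_add_left, this, add_zero]
    have h3 : Tendsto (fun n => ⟪yn n - c, u⟫) atTop (𝓝 (0 : ℝ)) := by
      simp only [h2]
      have := Filter.Tendsto.inner (𝕜 := ℝ) hdiff (tendsto_const_nhds (x := u))
      simpa using this
    have := tendsto_nhds_unique h1 h3
    rw [real_inner_comm] at this
    exact this
  rw [Submodule.orthogonal_orthogonal] at hmem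
  have := S.vadd_mem_of_mem_direction hmem hc
  simpa [vadd_eq_add] using this

theorem firm_nonexpansiveness_principle
    {X : Type*} [NormedAddCommGroup X] [InnerProductSpace ℝ X] [CompleteSpace X]
    (F : X → X)
    (hF : ∀ a b : X, ‖F a - F b‖ ^ 2 + ‖(a - F a) - (b - F b)‖ ^ 2 ≤ ‖a - b‖ ^ 2)
    (z x : X) (zn : ℕ → X)
    (hzweak : ∀ w : X, Tendsto (fun n => ⟪zn n, w⟫) atTop (𝓝 ⟪z, w⟫))
    (hFweak : ∀ w : X, Tendsto (fun n => ⟪F (zn n), w⟫) atTop (𝓝 ⟪x, w⟫))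
    (C D : AffineSubspace ℝ X)
    (hCne : (C : Set X).Nonempty) (hDne : (D : Set X).Nonempty)
    (hCcl : IsClosed (C : Set X)) (hDcl : IsClosed (D : Set X))
    (hdir : D.direction = C.directionᗮ)
    (PC PD : X → X)
    (hPC : ∀ w : X, PC w ∈ C ∧ ∀ v ∈ C, ‖w - PC w‖ ≤ ‖w - v‖)
    (hPD : ∀ w : X, PD w ∈ D ∧ ∀ v ∈ D, ‖w - PD w‖ ≤ ‖w - v‖)
    (hFproj : Tendsto (fun n => F (zn n) - PC (F (zn n))) atTop (𝓝 0))
    (hIded : Tendsto (fun n => (zn n - F (zn n)) - PD (zn n - F (zn n))) atTop (𝓝 0)) :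
    x ∈ C ∧ z ∈ {x} + (D : Set X) ∧ x = F z := by
  -- weak convergence of `zn - F zn` to `z - x`
  have hIweak : ∀ w : X, Tendsto (fun n => ⟪zn n - F (zn n), w⟫) atTop (𝓝 ⟪z - x, w⟫) := by
    intro w
    simp only [inner_sub_left]
    exact (hzweak w).sub (hFweak w)
  have hxC : x ∈ C :=
    mem_of_weak_affine C hCne hCcl x (fun n => F (zn n)) (fun n => PC (F (zn n)))
      (fun n => (hPC _).1) hFproj hFweak
  have hzxD : z - x ∈ D :=
    mem_of_weak_affine D hDne hDcl (z - x) (fun n => zn n - F (zn n))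
      (fun n => PD (zn n - F (zn n))) (fun n => (hPD _).1) hIded hIweak
  refine ⟨hxC, ?_, ?_⟩
  · exact Set.mem_add.mpr ⟨x, rfl, z - x, hzxD, by abel⟩
  -- Part 3 : x = F z
  · set w0 : X := x - F z with hw0
    set a : ℕ → X := fun n => F (zn n) - x with ha
    set e : ℕ → X := fun n => (zn n - F (zn n)) - (z - x) with he
    set ε : ℕ → X := fun n => F (zn n) - PC (F (zn n)) with hε
    set δ : ℕ → X := fun n => (zn n - F (zn n)) - PD (zn n - F (zn n)) with hδ
    set c : ℕ → X := fun n => PC (F (zn n)) - x with hc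
    set f : ℕ → X := fun n => PD (zn n - F (zn n)) - (z - x) with hf
    -- weak null sequences
    have haweak : ∀ v : X, Tendsto (fun n => ⟪a n, v⟫) atTop (𝓝 0) := by
      intro v
      have := (hFweak v).sub (tendsto_const_nhds (x := ⟪x, v⟫))
      simpa [ha, inner_sub_left, sub_self] using this
    have heweak : ∀ v : X, Tendsto (fun n => ⟪e n, v⟫) atTop (𝓝 0) := by
      intro v
      have := (hIweak v).sub (tendsto_const_nhds (x := ⟪z - x, v⟫))
      simpa [he, inner_sub_left, sub_self] using this
    have hεweak : ∀ v : X, Tendsto (fun n => ⟪ε n, v⟫) atTop (𝓝 0) := by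
      intro v
      have := Filter.Tendsto.inner (𝕜 := ℝ) hFproj (tendsto_const_nhds (x := v))
      simpa [hε] using this
    have hcweak : ∀ v : X, Tendsto (fun n => ⟪c n, v⟫) atTop (𝓝 0) := by
      intro v
      have h1 := (haweak v).sub (hεweak v)
      have h2 : ∀ n, ⟪a n, v⟫ - ⟪ε n, v⟫ = ⟪c n, v⟫ := by
        intro n
        rw [← inner_sub_left]
        congr 1
        simp only [ha, hε, hc]
        abel
      simpa [h2, sub_zero] using h1
    obtain ⟨Me, hMe⟩ := bdd_of_inner_tendsto e heweak
    obtain ⟨Mc, hMc⟩ := bdd_of_inner_tendsto c hcweak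
    have hMe0 : 0 ≤ Me := le_trans (norm_nonneg _) (hMe 0)
    have hMc0 : 0 ≤ Mc := le_trans (norm_nonneg _) (hMc 0)
    -- c n ⟂ f n
    have hcf : ∀ n, ⟪c n, f n⟫ = 0 := by
      intro n
      have hcd : c n ∈ C.direction := by
        simpa [hc, vsub_eq_sub] using C.vsub_mem_direction (hPC (F (zn n))).1 hxC
      have hfd : f n ∈ C.directionᗮ := by
        rw [← hdir]
        simpa [hf, vsub_eq_sub] using D.vsub_mem_direction (hPD (zn n - F (zn n))).1 hzxD
      exact hfd _ hcd
    -- nonnegativity from firm nonexpansiveness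
    have key : ∀ n, (0 : ℝ) ≤ ⟪F (zn n) - F z, (zn n - F (zn n)) - (z - F z)⟫ := by
      intro n
      have h1 := hF (zn n) z
      have h2 : zn n - z = (F (zn n) - F z) + ((zn n - F (zn n)) - (z - F z)) := by abel
      rw [h2, norm_add_sq_real] at h1
      nlinarith [h1]
    -- the algebraic expansion
    have hid : ∀ n, ⟪F (zn n) - F z, (zn n - F (zn n)) - (z - F z)⟫ =
        ⟪ε n, e n⟫ + ⟪c n, δ n⟫ + ⟪c n, f n⟫ + ⟪w0, e n⟫ - ⟪a n, w0⟫ - ⟪w0, w0⟫ := by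
      intro n
      have hu : F (zn n) - F z = (ε n + c n) + w0 := by simp only [hε, hc, hw0]; abel
      have hd : (zn n - F (zn n)) - (z - F z) = (δ n + f n) - w0 := by
        simp only [hδ, hf, hw0]; abel
      have hef : e n = δ n + f n := by simp only [he, hδ, hf]; abel
      have hac : a n = ε n + c n := by simp only [ha, hε, hc]; abel
      rw [hu, hd, hac, hef]
      simp only [inner_add_left, inner_add_right, inner_sub_left, inner_sub_right]
      ring
    -- limits of each term
    have T1 : Tendsto (fun n => ⟪ε n, e n⟫) atTop (𝓝 0) := by
      apply squeeze_zero_norm (a := fun n => ‖ε n‖ * Me)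
      · intro n
        calc ‖⟪ε n, e n⟫‖ ≤ ‖ε n‖ * ‖e n‖ := by
              simpa using abs_real_inner_le_norm (ε n) (e n)
          _ ≤ ‖ε n‖ * Me := by
              exact mul_le_mul_of_nonneg_left (hMe n) (norm_nonneg _)
      · have : Tendsto (fun n => ‖ε n‖) atTop (𝓝 0) := by
          simpa [hε] using hFproj.norm
        simpa using this.mul_const Me
    have T2 : Tendsto (fun n => ⟪c n, δ n⟫) atTop (𝓝 0) := by
      apply squeeze_zero_norm (a := fun n => Mc * ‖δ n‖)
      · intro n
        calc ‖⟪c n, δ n⟫‖ ≤ ‖c n‖ * ‖δ n‖ := by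
              simpa using abs_real_inner_le_norm (c n) (δ n)
          _ ≤ Mc * ‖δ n‖ := by
              exact mul_le_mul_of_nonneg_right (hMc n) (norm_nonneg _)
      · have : Tendsto (fun n => ‖δ n‖) atTop (𝓝 0) := by
          simpa [hδ] using hIded.norm
        simpa using this.const_mul Mc
    have T3 : Tendsto (fun n => ⟪c n, f n⟫) atTop (𝓝 0) := by
      simp only [hcf]
      exact tendsto_const_nhds
    have T4 : Tendsto (fun n => ⟪w0, e n⟫) atTop (𝓝 0) := by
      have := heweak w0
      simpa [real_inner_comm] using this
    have T5 : Tendsto (fun n => ⟪a n, w0⟫) atTop (𝓝 0) := haweak w0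
    have hlim : Tendsto (fun n => ⟪F (zn n) - F z, (zn n - F (zn n)) - (z - F z)⟫)
        atTop (𝓝 (-⟪w0, w0⟫)) := by
      have := ((((T1.add T2).add T3).add T4).sub T5).sub
        (tendsto_const_nhds (x := ⟪w0, w0⟫) (f := atTop))
      simp only [hid]
      simpa using this
    have hfin : (0 : ℝ) ≤ -⟪w0, w0⟫ := ge_of_tendsto' hlim key
    have hw00 : w0 = 0 := real_inner_self_nonpos.mp (by linarith)
    rw [hw0] at hw00
    exact sub_eq_zero.mp hw00
end

section
/- (Nonexpansiveness principle.) Let X be a real Hilbert space, let T : X → X be nonexpansive, let (z_n)_{n∈ℕ} be a sequence in X with z_n ⇀ z, and suppose that T z_n ⇀ y. Let C and D be closed affine subspaces of X such that D − D = (C − C)^⊥, and suppose that z_n + T z_n − P_C z_n − P_C(T z_n) → 0 and z_n − T z_n − P_D z_n − P_D(−T z_n) → 0. Then ½z + ½y ∈ C, ½z − ½y ∈ D, and y = T z. -/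
open Filter Topology RealInnerProductSpace

lemma proj_orth_aux {X : Type*} [NormedAddCommGroup X] [InnerProductSpace ℝ X]
    (C : AffineSubspace ℝ X) (P : X → X)
    (hP : ∀ w : X, P w ∈ C ∧ ∀ v ∈ C, ‖w - P w‖ ≤ ‖w - v‖) :
    ∀ w : X, ∀ d ∈ C.direction, ⟪w - P w, d⟫ = 0 := by
  intro w d hd
  by_cases hd0 : d = 0
  · simp [hd0]
  have hdn : 0 < (‖d‖ : ℝ) ^ 2 := pow_pos (norm_pos_iff.mpr hd0) 2
  set s : ℝ := ⟪w - P w, d⟫ with hs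
  have key : ∀ t : ℝ, 0 ≤ -(2 * t * s) + t ^ 2 * ‖d‖ ^ 2 := by
    intro t
    have hmem : t • d + P w ∈ C := by
      have := AffineSubspace.vadd_mem_of_mem_direction (C.direction.smul_mem t hd) (hP w).1
      simpa [vadd_eq_add] using this
    have hle := (hP w).2 _ hmem
    have h1 : ‖w - (t • d + P w)‖ ^ 2
        = ‖w - P w‖ ^ 2 - 2 * t * s + t ^ 2 * ‖d‖ ^ 2 := by
      have e : w - (t • d + P w) = (w - P w) - t • d := by abel
      have e2 : ‖t • d‖ ^ 2 = t ^ 2 * ‖d‖ ^ 2 := by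
        rw [norm_smul]; simp [mul_pow, sq_abs]
      rw [e, norm_sub_sq_real, real_inner_smul_right, e2, ← hs]
      ring
    have h2 : ‖w - P w‖ ^ 2 ≤ ‖w - (t • d + P w)‖ ^ 2 :=
      pow_le_pow_left₀ (norm_nonneg _) hle 2
    nlinarith
  have h2 := key (s / ‖d‖ ^ 2)
  have h3 : -(2 * (s / ‖d‖ ^ 2) * s) + (s / ‖d‖ ^ 2) ^ 2 * ‖d‖ ^ 2 = -(s ^ 2 / ‖d‖ ^ 2) := by
    field_simp
    ring
  rw [h3] at h2
  have h5 : s ^ 2 ≤ 0 := by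
    have := (div_le_iff₀ hdn).mp (by linarith : s ^ 2 / ‖d‖ ^ 2 ≤ 0)
    linarith
  have : s ^ 2 = 0 := le_antisymm h5 (sq_nonneg s)
  exact pow_eq_zero_iff (by norm_num) |>.mp this

lemma mem_of_proj_aux {X : Type*} [NormedAddCommGroup X] [InnerProductSpace ℝ X]
    (C : AffineSubspace ℝ X) (P : X → X)
    (hP : ∀ w : X, P w ∈ C ∧ ∀ v ∈ C, ‖w - P w‖ ≤ ‖w - v‖)
    (u : X) (un cn : ℕ → X)
    (hcn : ∀ n, cn n ∈ C)
    (hen : Tendsto (fun n => un n - cn n) atTop (𝓝 0))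
    (huw : ∀ w : X, Tendsto (fun n => ⟪un n, w⟫) atTop (𝓝 ⟪u, w⟫)) :
    u ∈ C := by
  have horth := proj_orth_aux C P hP
  obtain ⟨q, hqdef⟩ : ∃ q : X, q = u - P u := ⟨_, rfl⟩
  have hqn : ∀ n, ‖q‖ ^ 2 = ⟪q, u - un n⟫ + ⟪q, un n - cn n⟫ := by
    intro n
    have hcd : cn n - P u ∈ C.direction := by
      have := AffineSubspace.vsub_mem_direction (hcn n) (hP u).1
      simpa [vsub_eq_sub] using this
    have h0 : ⟪q, cn n - P u⟫ = 0 := by rw [hqdef]; exact horth u _ hcd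
    have hsplit : (q : X) = (u - un n) + (un n - cn n) + (cn n - P u) := by
      rw [hqdef]; abel
    calc ‖q‖ ^ 2 = ⟪q, q⟫ := (real_inner_self_eq_norm_sq q).symm
      _ = ⟪q, (u - un n) + (un n - cn n) + (cn n - P u)⟫ := by rw [← hsplit]
      _ = ⟪q, u - un n⟫ + ⟪q, un n - cn n⟫ + ⟪q, cn n - P u⟫ := by
          rw [inner_add_right, inner_add_right]
      _ = _ := by rw [h0]; ring
  have t1 : Tendsto (fun n => ⟪q, u - un n⟫) atTop (𝓝 0) := by
    have h := (huw q).const_sub ⟪u, q⟫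
    have e : (fun n : ℕ => ⟪u, q⟫ - ⟪un n, q⟫) = fun n => ⟪q, u - un n⟫ := by
      funext n
      rw [inner_sub_right, real_inner_comm q u, real_inner_comm q (un n)]
    rw [e] at h
    simpa using h
  have t2 : Tendsto (fun n => ⟪q, un n - cn n⟫) atTop (𝓝 0) := by
    have h : Tendsto (fun n : ℕ => ⟪q, un n - cn n⟫) atTop (𝓝 (⟪q, (0 : X)⟫ : ℝ)) :=
      Filter.Tendsto.inner tendsto_const_nhds hen
    simpa using h
  have hlim : Tendsto (fun n : ℕ => ‖q‖ ^ 2) atTop (𝓝 0) := by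
    have := (t1.add t2).congr (fun n => (hqn n).symm)
    simpa using this
  have hzero : ‖q‖ ^ 2 = (0 : ℝ) := tendsto_nhds_unique tendsto_const_nhds hlim
  have hq0 : q = 0 := norm_eq_zero.mp (pow_eq_zero_iff (by norm_num) |>.mp hzero)
  have : u = P u := by rwa [hqdef, sub_eq_zero] at hq0
  rw [this]; exact (hP u).1

theorem nonexpansiveness_principle
    {X : Type*} [NormedAddCommGroup X] [InnerProductSpace ℝ X] [CompleteSpace X]
    (T : X → X)
    (hT : ∀ a b : X, ‖T a - T b‖ ≤ ‖a - b‖)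
    (z y : X) (zn : ℕ → X)
    (hzweak : ∀ w : X, Tendsto (fun n => ⟪zn n, w⟫) atTop (𝓝 ⟪z, w⟫))
    (hTweak : ∀ w : X, Tendsto (fun n => ⟪T (zn n), w⟫) atTop (𝓝 ⟪y, w⟫))
    (C D : AffineSubspace ℝ X)
    (hCne : (C : Set X).Nonempty) (hDne : (D : Set X).Nonempty)
    (hCcl : IsClosed (C : Set X)) (hDcl : IsClosed (D : Set X))
    (hdir : D.direction = C.directionᗮ)
    (PC PD : X → X)
    (hPC : ∀ w : X, PC w ∈ C ∧ ∀ v ∈ C, ‖w - PC w‖ ≤ ‖w - v‖)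
    (hPD : ∀ w : X, PD w ∈ D ∧ ∀ v ∈ D, ‖w - PD w‖ ≤ ‖w - v‖)
    (hCasymp : Tendsto (fun n => zn n + T (zn n) - PC (zn n) - PC (T (zn n))) atTop (𝓝 0))
    (hDasymp : Tendsto (fun n => zn n - T (zn n) - PD (zn n) - PD (-T (zn n))) atTop (𝓝 0)) :
    (1 / 2 : ℝ) • z + (1 / 2 : ℝ) • y ∈ C ∧
      (1 / 2 : ℝ) • z - (1 / 2 : ℝ) • y ∈ D ∧ y = T z := by
  set u : X := (1 / 2 : ℝ) • z + (1 / 2 : ℝ) • y with hu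
  set v : X := (1 / 2 : ℝ) • z - (1 / 2 : ℝ) • y with hv
  set un : ℕ → X := fun n => (1 / 2 : ℝ) • zn n + (1 / 2 : ℝ) • T (zn n) with hun
  set vn : ℕ → X := fun n => (1 / 2 : ℝ) • zn n - (1 / 2 : ℝ) • T (zn n) with hvn
  set cn : ℕ → X := fun n => (1 / 2 : ℝ) • PC (zn n) + (1 / 2 : ℝ) • PC (T (zn n)) with hcn
  set dn : ℕ → X := fun n => (1 / 2 : ℝ) • PD (zn n) + (1 / 2 : ℝ) • PD (-T (zn n)) with hdn
  -- e_n → 0 and f_n → 0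
  have hen : Tendsto (fun n => un n - cn n) atTop (𝓝 0) := by
    have h := hCasymp.const_smul (1 / 2 : ℝ)
    rw [smul_zero] at h
    refine h.congr fun n => ?_
    simp only [hun, hcn]
    module
  have hfn : Tendsto (fun n => vn n - dn n) atTop (𝓝 0) := by
    have h := hDasymp.const_smul (1 / 2 : ℝ)
    rw [smul_zero] at h
    refine h.congr fun n => ?_
    simp only [hvn, hdn]
    module
  -- weak convergence of the midpoint sequences
  have hunw : ∀ w : X, Tendsto (fun n => ⟪un n, w⟫) atTop (𝓝 ⟪u, w⟫) := by
    intro w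
    have h := ((hzweak w).const_mul (1 / 2 : ℝ)).add ((hTweak w).const_mul (1 / 2 : ℝ))
    have e2 : (⟪u, w⟫ : ℝ) = 1 / 2 * ⟪z, w⟫ + 1 / 2 * ⟪y, w⟫ := by
      rw [hu, inner_add_left, real_inner_smul_left, real_inner_smul_left]
    rw [e2]
    refine h.congr fun n => ?_
    simp only [hun]
    rw [inner_add_left, real_inner_smul_left, real_inner_smul_left]
  have hvnw : ∀ w : X, Tendsto (fun n => ⟪vn n, w⟫) atTop (𝓝 ⟪v, w⟫) := by
    intro w
    have h := ((hzweak w).const_mul (1 / 2 : ℝ)).sub ((hTweak w).const_mul (1 / 2 : ℝ))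
    have e2 : (⟪v, w⟫ : ℝ) = 1 / 2 * ⟪z, w⟫ - 1 / 2 * ⟪y, w⟫ := by
      rw [hv, inner_sub_left, real_inner_smul_left, real_inner_smul_left]
    rw [e2]
    refine h.congr fun n => ?_
    simp only [hvn]
    rw [inner_sub_left, real_inner_smul_left, real_inner_smul_left]
  -- the midpoints lie in C resp. D
  have hcnC : ∀ n, cn n ∈ C := by
    intro n
    have hd : (1 / 2 : ℝ) • (PC (T (zn n)) - PC (zn n)) ∈ C.direction :=
      C.direction.smul_mem _ (by
        simpa [vsub_eq_sub] using
          AffineSubspace.vsub_mem_direction (hPC (T (zn n))).1 (hPC (zn n)).1)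
    have h := AffineSubspace.vadd_mem_of_mem_direction hd (hPC (zn n)).1
    have e : (1 / 2 : ℝ) • (PC (T (zn n)) - PC (zn n)) +ᵥ PC (zn n) = cn n := by
      simp only [hcn, vadd_eq_add]
      module
    rwa [e] at h
  have hdnD : ∀ n, dn n ∈ D := by
    intro n
    have hd : (1 / 2 : ℝ) • (PD (-T (zn n)) - PD (zn n)) ∈ D.direction :=
      D.direction.smul_mem _ (by
        simpa [vsub_eq_sub] using
          AffineSubspace.vsub_mem_direction (hPD (-T (zn n))).1 (hPD (zn n)).1)
    have h := AffineSubspace.vadd_mem_of_mem_direction hd (hPD (zn n)).1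
    have e : (1 / 2 : ℝ) • (PD (-T (zn n)) - PD (zn n)) +ᵥ PD (zn n) = dn n := by
      simp only [hdn, vadd_eq_add]
      module
    rwa [e] at h
  have huC : u ∈ C := mem_of_proj_aux C PC hPC u un cn hcnC hen hunw
  have hvD : v ∈ D := mem_of_proj_aux D PD hPD v vn dn hdnD hfn hvnw
  -- boundedness via Banach–Steinhaus
  have hbz : ∃ M : ℝ, ∀ n, ‖zn n‖ ≤ M := by
    have h : ∀ w : X, ∃ Cb : ℝ, ∀ n : ℕ, ‖(innerSL ℝ (zn n)) w‖ ≤ Cb := by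
      intro w
      obtain ⟨Cb, hCb⟩ := ((hzweak w).norm).bddAbove_range
      exact ⟨Cb, fun n => by simpa using hCb (Set.mem_range_self n)⟩
    obtain ⟨M, hM⟩ := banach_steinhaus h
    exact ⟨M, fun n => by simpa [innerSL_apply_norm] using hM n⟩
  have hbT : ∃ M : ℝ, ∀ n, ‖T (zn n)‖ ≤ M := by
    have h : ∀ w : X, ∃ Cb : ℝ, ∀ n : ℕ, ‖(innerSL ℝ (T (zn n))) w‖ ≤ Cb := by
      intro w
      obtain ⟨Cb, hCb⟩ := ((hTweak w).norm).bddAbove_range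
      exact ⟨Cb, fun n => by simpa using hCb (Set.mem_range_self n)⟩
    obtain ⟨M, hM⟩ := banach_steinhaus h
    exact ⟨M, fun n => by simpa [innerSL_apply_norm] using hM n⟩
  obtain ⟨M1, hM1⟩ := hbz
  obtain ⟨M2, hM2⟩ := hbT
  have hbA : ∀ n, ‖un n - u‖ ≤ 1 / 2 * M1 + 1 / 2 * M2 + ‖u‖ := by
    intro n
    refine (norm_sub_le _ _).trans ?_
    have h1 : ‖un n‖ ≤ 1 / 2 * M1 + 1 / 2 * M2 := by
      simp only [hun]
      refine (norm_add_le _ _).trans ?_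
      rw [norm_smul, norm_smul]
      have := hM1 n; have := hM2 n
      simp only [Real.norm_eq_abs]
      rw [abs_of_nonneg (by norm_num : (0:ℝ) ≤ 1 / 2)]
      linarith
    linarith
  have hbB : ∀ n, ‖vn n - v‖ ≤ 1 / 2 * M1 + 1 / 2 * M2 + ‖v‖ := by
    intro n
    refine (norm_sub_le _ _).trans ?_
    have h1 : ‖vn n‖ ≤ 1 / 2 * M1 + 1 / 2 * M2 := by
      simp only [hvn]
      refine (norm_sub_le _ _).trans ?_
      rw [norm_smul, norm_smul]
      have := hM1 n; have := hM2 n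
      simp only [Real.norm_eq_abs]
      rw [abs_of_nonneg (by norm_num : (0:ℝ) ≤ 1 / 2)]
      linarith
    linarith
  -- orthogonality of the two direction components
  have horthCD : ∀ n, (⟪cn n - u, dn n - v⟫ : ℝ) = 0 := by
    intro n
    have h1 : cn n - u ∈ C.direction := by
      simpa [vsub_eq_sub] using AffineSubspace.vsub_mem_direction (hcnC n) huC
    have h2 : dn n - v ∈ C.directionᗮ := by
      rw [← hdir]
      simpa [vsub_eq_sub] using AffineSubspace.vsub_mem_direction (hdnD n) hvD
    exact Submodule.inner_right_of_mem_orthogonal h1 h2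
  have decomp : ∀ n, (⟪un n - u, vn n - v⟫ : ℝ)
      = ⟪un n - cn n, vn n - v⟫ + ⟪un n - u, vn n - dn n⟫ - ⟪un n - cn n, vn n - dn n⟫ := by
    intro n
    have h := horthCD n
    simp only [inner_sub_left, inner_sub_right] at h ⊢
    linarith
  -- the key inner product goes to 0
  have hAB : Tendsto (fun n => (⟪un n - u, vn n - v⟫ : ℝ)) atTop (𝓝 0) := by
    have t1 : Tendsto (fun n => (⟪un n - cn n, vn n - v⟫ : ℝ)) atTop (𝓝 0) := by
      apply squeeze_zero_norm (a := fun n => ‖un n - cn n‖ * (1 / 2 * M1 + 1 / 2 * M2 + ‖v‖))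
      · intro n
        exact (norm_inner_le_norm _ _).trans
          (mul_le_mul_of_nonneg_left (hbB n) (norm_nonneg _))
      · have := hen.norm.mul_const (1 / 2 * M1 + 1 / 2 * M2 + ‖v‖)
        simpa using this
    have t2 : Tendsto (fun n => (⟪un n - u, vn n - dn n⟫ : ℝ)) atTop (𝓝 0) := by
      apply squeeze_zero_norm (a := fun n => (1 / 2 * M1 + 1 / 2 * M2 + ‖u‖) * ‖vn n - dn n‖)
      · intro n
        exact (norm_inner_le_norm _ _).trans
          (mul_le_mul_of_nonneg_right (hbA n) (norm_nonneg _))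
      · have := hfn.norm.const_mul (1 / 2 * M1 + 1 / 2 * M2 + ‖u‖)
        simpa using this
    have t3 : Tendsto (fun n => (⟪un n - cn n, vn n - dn n⟫ : ℝ)) atTop (𝓝 0) := by
      apply squeeze_zero_norm (a := fun n => ‖un n - cn n‖ * ‖vn n - dn n‖)
      · intro n
        exact norm_inner_le_norm _ _
      · have := hen.norm.mul hfn.norm
        simpa using this
    have h := ((t1.add t2).sub t3).congr (fun n => (decomp n).symm)
    simpa using h
  -- the inequality coming from nonexpansiveness
  have hineq : ∀ n, ‖y - T z‖ ^ 2
      ≤ 4 * ⟪un n - u, vn n - v⟫ - 2 * (⟪T (zn n), y - T z⟫ - ⟪y, y - T z⟫) := by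
    intro n
    have h1 := hT (zn n) z
    have h2 : ‖T (zn n) - T z‖ ^ 2 ≤ ‖zn n - z‖ ^ 2 :=
      pow_le_pow_left₀ (norm_nonneg _) h1 2
    have e1 : zn n - z = (un n - u) + (vn n - v) := by
      simp only [hun, hvn, hu, hv]; module
    have e2 : T (zn n) - T z = ((un n - u) - (vn n - v)) + (y - T z) := by
      simp only [hun, hvn, hu, hv]; module
    have e3 : T (zn n) - y = (un n - u) - (vn n - v) := by
      simp only [hun, hvn, hu, hv]; module
    have E1 : ‖zn n - z‖ ^ 2
        = ‖un n - u‖ ^ 2 + 2 * ⟪un n - u, vn n - v⟫ + ‖vn n - v‖ ^ 2 := by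
      rw [e1]; exact norm_add_sq_real _ _
    have E2 : ‖T (zn n) - T z‖ ^ 2
        = ‖(un n - u) - (vn n - v)‖ ^ 2
          + 2 * ⟪(un n - u) - (vn n - v), y - T z⟫ + ‖y - T z‖ ^ 2 := by
      rw [e2]; exact norm_add_sq_real _ _
    have E3 : ‖(un n - u) - (vn n - v)‖ ^ 2
        = ‖un n - u‖ ^ 2 - 2 * ⟪un n - u, vn n - v⟫ + ‖vn n - v‖ ^ 2 :=
      norm_sub_sq_real _ _
    have E4 : (⟪(un n - u) - (vn n - v), y - T z⟫ : ℝ)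
        = ⟪T (zn n), y - T z⟫ - ⟪y, y - T z⟫ := by
      rw [← e3, inner_sub_left]
    linarith
  have hRlim : Tendsto
      (fun n => 4 * (⟪un n - u, vn n - v⟫ : ℝ)
        - 2 * (⟪T (zn n), y - T z⟫ - ⟪y, y - T z⟫)) atTop (𝓝 0) := by
    have tA : Tendsto (fun n => (⟪T (zn n), y - T z⟫ : ℝ) - ⟪y, y - T z⟫) atTop (𝓝 0) := by
      have := (hTweak (y - T z)).sub_const ⟪y, y - T z⟫
      simpa using this
    have := (hAB.const_mul 4).sub (tA.const_mul 2)
    simpa using this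
  have hle : ‖y - T z‖ ^ 2 ≤ 0 := ge_of_tendsto' hRlim hineq
  have hg : y - T z = 0 := by
    have h0 : ‖y - T z‖ ^ 2 = 0 := le_antisymm hle (by positivity)
    exact norm_eq_zero.mp (pow_eq_zero_iff (by norm_num) |>.mp h0)
  exact ⟨huC, hvD, sub_eq_zero.mp hg⟩
end

section
/- (Classical demiclosedness principle.) Let X be a real Hilbert space, let S be a nonempty closed convex subset of X, let T : S → X be nonexpansive, let (z_n)_{n∈ℕ} be a sequence in S converging weakly to z, and suppose that z_n − T z_n converges in norm to x. Then z − T z = x. -/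
open Filter Topology RealInnerProductSpace

theorem classical_demiclosedness_principle
    {X : Type*} [NormedAddCommGroup X] [InnerProductSpace ℝ X] [CompleteSpace X]
    (S : Set X) (hSne : S.Nonempty) (hScl : IsClosed S) (hSconv : Convex ℝ S)
    (T : X → X)
    (hT : ∀ a ∈ S, ∀ b ∈ S, ‖T a - T b‖ ≤ ‖a - b‖)
    (z x : X) (zn : ℕ → X) (hznS : ∀ n, zn n ∈ S)
    (hzweak : ∀ w : X, Tendsto (fun n => ⟪zn n, w⟫) atTop (𝓝 ⟪z, w⟫))
    (hres : Tendsto (fun n => zn n - T (zn n)) atTop (𝓝 x)) :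
    z ∈ S ∧ z - T z = x := by
  -- Step 1: z ∈ S
  have hzS : z ∈ S := by
    by_contra hznot
    obtain ⟨f, u, hfu, huz⟩ := geometric_hahn_banach_closed_point hSconv hScl hznot
    set w := (InnerProductSpace.toDual ℝ X).symm f with hw
    have hfw : ∀ y : X, ⟪y, w⟫ = f y := by
      intro y
      rw [real_inner_comm]
      exact InnerProductSpace.toDual_symm_apply
    have h1 : Tendsto (fun n => f (zn n)) atTop (𝓝 (f z)) := by
      have := hzweak w
      simp only [hfw] at this
      exact this
    have h2 : f z ≤ u := le_of_tendsto h1 (Eventually.of_forall fun n => (hfu _ (hznS n)).le)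
    linarith
  -- Step 2: boundedness of zn via Banach–Steinhaus
  obtain ⟨C, hC⟩ : ∃ C, ∀ n, ‖zn n‖ ≤ C := by
    set g : ℕ → X →L[ℝ] ℝ := fun n => InnerProductSpace.toDual ℝ X (zn n) with hg
    obtain ⟨C, hC⟩ := banach_steinhaus (g := g) (fun w => by
      have habs : Tendsto (fun n => |⟪zn n, w⟫|) atTop (𝓝 |⟪z, w⟫|) := (hzweak w).abs
      obtain ⟨B, hB⟩ := habs.bddAbove_range
      refine ⟨B, fun n => ?_⟩
      have := hB (Set.mem_range_self n)
      simpa [hg, InnerProductSpace.toDual_apply_apply, Real.norm_eq_abs] using this)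
    refine ⟨C, fun n => ?_⟩
    have : ‖g n‖ = ‖zn n‖ := (InnerProductSpace.toDual ℝ X).norm_map (zn n)
    rw [← this]; exact hC n
  -- Step 3: the key inequality
  set r : ℕ → X := fun n => zn n - T (zn n) with hr
  set v : X := z - T z - x with hv
  have key : ∀ n, 2 * ⟪zn n - z, z - T z - r n⟫ + ‖z - T z - r n‖ ^ 2 ≤ 0 := by
    intro n
    have hle : ‖T (zn n) - T z‖ ≤ ‖zn n - z‖ := hT _ (hznS n) _ hzS
    have hsq : ‖T (zn n) - T z‖ ^ 2 ≤ ‖zn n - z‖ ^ 2 := by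
      have := mul_self_le_mul_self (norm_nonneg _) hle
      nlinarith [norm_nonneg (T (zn n) - T z), norm_nonneg (zn n - z)]
    have hid : T (zn n) - T z = (zn n - z) + (z - T z - r n) := by
      simp only [hr]; abel
    rw [hid, norm_add_sq_real] at hsq
    linarith
  -- Step 4: pass to the limit
  have hrv : Tendsto (fun n => z - T z - r n) atTop (𝓝 v) := by
    simpa [hv] using (tendsto_const_nhds (x := z - T z)).sub hres
  have hlim1 : Tendsto (fun n => ⟪zn n - z, v⟫) atTop (𝓝 0) := by
    have := (hzweak v).sub (tendsto_const_nhds (x := ⟪z, v⟫))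
    simp only [sub_self] at this
    simpa [inner_sub_left] using this
  have hlim2 : Tendsto (fun n => ⟪zn n - z, x - r n⟫) atTop (𝓝 0) := by
    apply squeeze_zero_norm (a := fun n => (C + ‖z‖) * ‖x - r n‖)
    · intro n
      calc ‖⟪zn n - z, x - r n⟫‖ ≤ ‖zn n - z‖ * ‖x - r n‖ := by
            simpa [Real.norm_eq_abs] using abs_real_inner_le_norm (zn n - z) (x - r n)
        _ ≤ (C + ‖z‖) * ‖x - r n‖ := by
            apply mul_le_mul_of_nonneg_right _ (norm_nonneg _)
            calc ‖zn n - z‖ ≤ ‖zn n‖ + ‖z‖ := norm_sub_le _ _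
              _ ≤ C + ‖z‖ := by linarith [hC n]
    · have : Tendsto (fun n => x - r n) atTop (𝓝 0) := by
        simpa using (tendsto_const_nhds (x := x)).sub hres
      simpa using (this.norm.const_mul (C + ‖z‖))
  have hlim3 : Tendsto (fun n => ⟪zn n - z, z - T z - r n⟫) atTop (𝓝 0) := by
    have heq : ∀ n, ⟪zn n - z, z - T z - r n⟫ = ⟪zn n - z, v⟫ + ⟪zn n - z, x - r n⟫ := by
      intro n
      rw [← inner_add_right]
      congr 1
      simp only [hv]; abel
    simp only [heq]
    simpa using hlim1.add hlim2
  have hlim4 : Tendsto (fun n => 2 * ⟪zn n - z, z - T z - r n⟫ + ‖z - T z - r n‖ ^ 2)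
      atTop (𝓝 (‖v‖ ^ 2)) := by
    have h1 := hlim3.const_mul 2
    have h2 : Tendsto (fun n => ‖z - T z - r n‖ ^ 2) atTop (𝓝 (‖v‖ ^ 2)) :=
      (hrv.norm).pow 2
    simpa using h1.add h2
  have hfinal : ‖v‖ ^ 2 ≤ 0 := le_of_tendsto hlim4 (Eventually.of_forall key)
  have hv0 : v = 0 := by
    have : ‖v‖ = 0 := by nlinarith [norm_nonneg v, sq_nonneg ‖v‖]
    exact norm_eq_zero.mp this
  refine ⟨hzS, ?_⟩
  have := hv0
  rw [hv, sub_eq_zero] at this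
  exact this
end

section
/- (Multi-operator demiclosedness principle for firmly nonexpansive operators.) Let X be a real Hilbert space, let m ≥ 2 be an integer, let I = {1, …, m}, and let (F_i)_{i∈I} be a family of firmly nonexpansive operators on X. For each i ∈ I let (z_{i,n})_{n∈ℕ} be a sequence in X such that, for all i, j ∈ I: z_{i,n} ⇀ z_i and F_i z_{i,n} ⇀ x; the sum over i ∈ I of (z_{i,n} − F_i z_{i,n}) converges in norm to −m x + ∑_{i∈I} z_i; and F_i z_{i,n} − F_j z_{j,n} → 0 in norm. Then F_i z_i = x for every i ∈ I. -/
open Filter Topology RealInnerProductSpace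

/-- A weakly convergent sequence in a Hilbert space is norm-bounded. -/
lemma weak_bdd_aux {X : Type*} [NormedAddCommGroup X] [InnerProductSpace ℝ X] [CompleteSpace X]
    (u : ℕ → X) (a : X)
    (h : ∀ w : X, Tendsto (fun n => ⟪u n, w⟫) atTop (𝓝 ⟪a, w⟫)) :
    ∃ C : ℝ, ∀ n, ‖u n‖ ≤ C := by
  have hpt : ∀ w : X, ∃ C, ∀ n, ‖(innerSL ℝ (u n)) w‖ ≤ C := by
    intro w
    obtain ⟨C, hC⟩ := ((h w).abs).bddAbove_range
    refine ⟨C, fun n => ?_⟩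
    simpa [Real.norm_eq_abs] using hC ⟨n, rfl⟩
  obtain ⟨C, hC⟩ := banach_steinhaus hpt
  exact ⟨C, fun n => by simpa [innerSL_apply_norm] using hC n⟩

/-- Weak-strong pairing: the inner product of a bounded weakly convergent sequence with a
strongly convergent sequence converges to the inner product of the limits. -/
lemma weak_strong_pair {X : Type*} [NormedAddCommGroup X] [InnerProductSpace ℝ X]
    {u : ℕ → X} {a : X} {v : ℕ → X} {b : X} {C : ℝ}
    (hC : ∀ n, ‖u n‖ ≤ C)
    (hu : ∀ w : X, Tendsto (fun n => ⟪u n, w⟫) atTop (𝓝 ⟪a, w⟫))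
    (hv : Tendsto v atTop (𝓝 b)) :
    Tendsto (fun n => ⟪u n, v n⟫) atTop (𝓝 ⟪a, b⟫) := by
  have h1 : Tendsto (fun n => ⟪u n, v n - b⟫) atTop (𝓝 0) := by
    apply squeeze_zero_norm (a := fun n => C * ‖v n - b‖)
    · intro n
      calc ‖⟪u n, v n - b⟫‖ ≤ ‖u n‖ * ‖v n - b‖ := norm_inner_le_norm _ _
        _ ≤ C * ‖v n - b‖ := by
            exact mul_le_mul_of_nonneg_right (hC n) (norm_nonneg _)
    · have : Tendsto (fun n => ‖v n - b‖) atTop (𝓝 0) := by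
        simpa using (tendsto_sub_nhds_zero_iff.mpr hv).norm
      simpa using this.const_mul C
  have h2 : Tendsto (fun n => ⟪u n, v n - b⟫ + ⟪u n, b⟫) atTop (𝓝 (0 + ⟪a, b⟫)) :=
    h1.add (hu b)
  simpa [inner_sub_right] using h2

theorem multi_operator_demiclosedness_firmly_nonexpansive
    {X : Type*} [NormedAddCommGroup X] [InnerProductSpace ℝ X] [CompleteSpace X]
    (m : ℕ) (hm : 2 ≤ m)
    (F : Fin m → X → X)
    (hF : ∀ i, ∀ a b : X,
      ‖F i a - F i b‖ ^ 2 + ‖(a - F i a) - (b - F i b)‖ ^ 2 ≤ ‖a - b‖ ^ 2)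
    (zn : Fin m → ℕ → X) (z : Fin m → X) (x : X)
    (hzweak : ∀ i, ∀ w : X, Tendsto (fun n => ⟪zn i n, w⟫) atTop (𝓝 ⟪z i, w⟫))
    (hFweak : ∀ i, ∀ w : X, Tendsto (fun n => ⟪F i (zn i n), w⟫) atTop (𝓝 ⟪x, w⟫))
    (hsum : Tendsto (fun n => ∑ i, (zn i n - F i (zn i n))) atTop
      (𝓝 (-((m : ℝ) • x) + ∑ i, z i)))
    (hdiff : ∀ i j, Tendsto (fun n => F i (zn i n) - F j (zn j n)) atTop (𝓝 0)) :
    ∀ i, F i (z i) = x := by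
  have hm0 : 0 < m := by omega
  set i0 : Fin m := ⟨0, hm0⟩ with hi0
  set yn : Fin m → ℕ → X := fun i n => F i (zn i n) with hyn
  set en : Fin m → ℕ → X := fun i n => zn i n - F i (zn i n) with hen
  set p : Fin m → X := fun i => F i (z i) with hp
  -- weak convergence of en i to z i - x
  have henweak : ∀ i, ∀ w : X, Tendsto (fun n => ⟪en i n, w⟫) atTop (𝓝 ⟪z i - x, w⟫) := by
    intro i w
    have := (hzweak i w).sub (hFweak i w)
    simpa [hen, inner_sub_left] using this
  -- boundedness
  have hbde : ∀ i, ∃ C, ∀ n, ‖en i n‖ ≤ C := fun i => weak_bdd_aux _ _ (henweak i)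
  obtain ⟨Cy, hCy⟩ : ∃ C, ∀ n, ‖yn i0 n‖ ≤ C := weak_bdd_aux _ x (hFweak i0)
  -- positivity from firm nonexpansiveness
  have key : ∀ n, (0:ℝ) ≤ ∑ i, ⟪yn i n - p i, en i n - (z i - p i)⟫ := by
    intro n
    apply Finset.sum_nonneg
    intro i _
    have h := hF i (zn i n) (z i)
    have hab : zn i n - z i
        = (F i (zn i n) - F i (z i)) + ((zn i n - F i (zn i n)) - (z i - F i (z i))) := by abel
    rw [hab, norm_add_sq_real] at h
    have : (0:ℝ) ≤ ⟪F i (zn i n) - F i (z i), (zn i n - F i (zn i n)) - (z i - F i (z i))⟫ := by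
      linarith
    simpa [hyn, hen, hp] using this
  -- limit of the main term
  have hA1 : Tendsto (fun n => ∑ i, ⟪yn i n - yn i0 n, en i n⟫) atTop (𝓝 0) := by
    have : Tendsto (fun n => ∑ i, ⟪yn i n - yn i0 n, en i n⟫) atTop
        (𝓝 (∑ _i : Fin m, (0:ℝ))) := by
      apply tendsto_finset_sum
      intro i _
      obtain ⟨C, hC⟩ := hbde i
      apply squeeze_zero_norm (a := fun n => ‖yn i n - yn i0 n‖ * C)
      · intro n
        calc ‖⟪yn i n - yn i0 n, en i n⟫‖ ≤ ‖yn i n - yn i0 n‖ * ‖en i n‖ :=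
              norm_inner_le_norm _ _
          _ ≤ ‖yn i n - yn i0 n‖ * C := by
              exact mul_le_mul_of_nonneg_left (hC n) (norm_nonneg _)
      · have : Tendsto (fun n => ‖yn i n - yn i0 n‖) atTop (𝓝 0) := by
          simpa [hyn] using (hdiff i i0).norm
        simpa using this.mul_const C
    simpa using this
  have hA2 : Tendsto (fun n => ⟪yn i0 n, ∑ i, en i n⟫) atTop
      (𝓝 ⟪x, -((m : ℝ) • x) + ∑ i, z i⟫) :=
    weak_strong_pair hCy (hFweak i0) hsum
  have hB : Tendsto (fun n => ∑ i, ⟪yn i n, z i - p i⟫) atTop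
      (𝓝 (∑ i, ⟪x, z i - p i⟫)) :=
    tendsto_finset_sum _ (fun i _ => hFweak i (z i - p i))
  have hC : Tendsto (fun n => ∑ i, ⟪p i, en i n⟫) atTop
      (𝓝 (∑ i, ⟪p i, z i - x⟫)) := by
    apply tendsto_finset_sum
    intro i _
    have := henweak i (p i)
    have h2 : ∀ n, ⟪en i n, p i⟫ = ⟪p i, en i n⟫ := fun n => real_inner_comm _ _
    rw [real_inner_comm] at this
    exact this.congr h2
  -- decompose q
  have hq_eq : ∀ n, (∑ i, ⟪yn i n - p i, en i n - (z i - p i)⟫)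
      = ((∑ i, ⟪yn i n - yn i0 n, en i n⟫) + ⟪yn i0 n, ∑ i, en i n⟫)
        - (∑ i, ⟪yn i n, z i - p i⟫) - (∑ i, ⟪p i, en i n⟫)
        + (∑ i, ⟪p i, z i - p i⟫) := by
    intro n
    rw [inner_sum]
    rw [← Finset.sum_add_distrib, ← Finset.sum_sub_distrib, ← Finset.sum_sub_distrib,
      ← Finset.sum_add_distrib]
    apply Finset.sum_congr rfl
    intro i _
    simp only [inner_sub_left, inner_sub_right]
    ring
  have hq : Tendsto (fun n => ∑ i, ⟪yn i n - p i, en i n - (z i - p i)⟫) atTop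
      (𝓝 ((0 + ⟪x, -((m : ℝ) • x) + ∑ i, z i⟫)
        - (∑ i, ⟪x, z i - p i⟫) - (∑ i, ⟪p i, z i - x⟫) + (∑ i, ⟪p i, z i - p i⟫))) := by
    have := (((hA1.add hA2).sub hB).sub hC).add_const (∑ i, ⟪p i, z i - p i⟫)
    exact this.congr (fun n => (hq_eq n).symm)
  have hL : (0 + ⟪x, -((m : ℝ) • x) + ∑ i, z i⟫)
      - (∑ i, ⟪x, z i - p i⟫) - (∑ i, ⟪p i, z i - x⟫) + (∑ i, ⟪p i, z i - p i⟫)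
      = -∑ i, ‖p i - x‖ ^ 2 := by
    have hmx : ⟪x, -((m : ℝ) • x) + ∑ i, z i⟫
        = ∑ i : Fin m, (⟪x, z i⟫ - ‖x‖ ^ 2) := by
      rw [inner_add_right, inner_neg_right, real_inner_smul_right, real_inner_self_eq_norm_sq,
        inner_sum, Finset.sum_sub_distrib, Finset.sum_const]
      simp only [Finset.card_univ, Fintype.card_fin, nsmul_eq_mul]
      ring
    rw [hmx, zero_add, ← Finset.sum_sub_distrib, ← Finset.sum_sub_distrib,
      ← Finset.sum_add_distrib, ← Finset.sum_neg_distrib]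
    apply Finset.sum_congr rfl
    intro i _
    simp only [inner_sub_right, norm_sub_sq_real, real_inner_self_eq_norm_sq,
      real_inner_comm (p i) x]
    ring
  rw [hL] at hq
  have hnonneg : (0:ℝ) ≤ -∑ i, ‖p i - x‖ ^ 2 := ge_of_tendsto' hq key
  have hzero : ∀ i ∈ Finset.univ, ‖p i - x‖ ^ 2 = 0 := by
    rw [← Finset.sum_eq_zero_iff_of_nonneg (fun i _ => by positivity)]
    have h1 : (0:ℝ) ≤ ∑ i, ‖p i - x‖ ^ 2 :=
      Finset.sum_nonneg (fun i _ => by positivity)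
    linarith
  intro i
  have := hzero i (Finset.mem_univ i)
  have : p i - x = 0 := by
    simpa [pow_eq_zero_iff] using this
  have : p i = x := by
    simpa [sub_eq_zero] using this
  simpa [hp] using this
end

section
/- (Svaiter's weak convergence of Douglas–Rachford, shadow sequence.) Let X be a real Hilbert space, let A and B be maximally monotone operators on X with zer(A + B) ≠ ∅, and set T = J_B ∘ (2J_A − Id) + (Id − J_A). Let z_0 ∈ X and define z_{n+1} = T z_n for all n ∈ ℕ. Then (z_n)_{n∈ℕ} converges weakly to a point z ∈ Fix T, and the sequence (J_A z_n)_{n∈ℕ} converges weakly to J_A z, which belongs to zer(A + B). -/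
open Filter Topology RealInnerProductSpace

/-- `J` is the resolvent `(A + Id)⁻¹` of the operator with graph `A`: it sends each
point `w` to the unique point `p` with `(p, w - p) ∈ A`. -/
def IsResolventOf {X : Type*} [NormedAddCommGroup X] [InnerProductSpace ℝ X]
    (J : X → X) (A : Set (X × X)) : Prop :=
  ∀ w : X, (J w, w - J w) ∈ A ∧ ∀ p : X, (p, w - p) ∈ A → p = J w

section H

variable {X : Type*} [NormedAddCommGroup X] [InnerProductSpace ℝ X]

private lemma ultrafilter_weak_limit [CompleteSpace X] (G : Ultrafilter ℕ) (w : ℕ → X) (M : ℝ)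
    (hM : ∀ n, ‖w n‖ ≤ M) :
    ∃ p : X, ∀ v : X, Tendsto (fun n => ⟪w n, v⟫) (G : Filter ℕ) (𝓝 ⟪p, v⟫) := by
  have key : ∀ v : X, ∃ r : ℝ, Tendsto (fun n => ⟪w n, v⟫) (G : Filter ℕ) (𝓝 r) := by
    intro v
    have hb : ∀ n : ℕ, (fun n => ⟪w n, v⟫) n ∈ Set.Icc (-(M * ‖v‖)) (M * ‖v‖) := by
      intro n
      have h1 : |⟪w n, v⟫| ≤ M * ‖v‖ := by
        refine le_trans (abs_real_inner_le_norm _ _) ?_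
        exact mul_le_mul_of_nonneg_right (hM n) (norm_nonneg v)
      exact ⟨(abs_le.mp h1).1, (abs_le.mp h1).2⟩
    obtain ⟨r, -, hr⟩ := (isCompact_Icc (a := -(M * ‖v‖)) (b := M * ‖v‖)).ultrafilter_le_nhds
      (G.map (fun n => ⟪w n, v⟫))
      (by rw [Ultrafilter.coe_map, le_principal_iff]; exact Filter.mem_map.mpr (Filter.univ_mem' hb))
    exact ⟨r, by rwa [Ultrafilter.coe_map] at hr⟩
  choose φ hφ using key
  have hadd : ∀ v₁ v₂, φ (v₁ + v₂) = φ v₁ + φ v₂ := by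
    intro v₁ v₂
    refine tendsto_nhds_unique (hφ _) ?_
    simpa [inner_add_right] using (hφ v₁).add (hφ v₂)
  have hsmul : ∀ (r : ℝ) (v : X), φ (r • v) = r * φ v := by
    intro r v
    refine tendsto_nhds_unique (hφ _) ?_
    simpa [real_inner_smul_right] using (hφ v).const_mul r
  let F : X →ₗ[ℝ] ℝ := { toFun := φ, map_add' := hadd, map_smul' := hsmul }
  have hFb : ∀ v : X, ‖F v‖ ≤ M * ‖v‖ := by
    intro v
    have h1 : Tendsto (fun n => |⟪w n, v⟫|) (G : Filter ℕ) (𝓝 |φ v|) := (hφ v).abs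
    have h2 : |φ v| ≤ M * ‖v‖ := by
      refine le_of_tendsto h1 (Eventually.of_forall fun n => ?_)
      refine le_trans (abs_real_inner_le_norm _ _) ?_
      exact mul_le_mul_of_nonneg_right (hM n) (norm_nonneg v)
    rw [Real.norm_eq_abs]
    exact h2
  let Fc : X →L[ℝ] ℝ := F.mkContinuous M hFb
  refine ⟨(InnerProductSpace.toDual ℝ X).symm Fc, fun v => ?_⟩
  have h3 : ⟪(InnerProductSpace.toDual ℝ X).symm Fc, v⟫ = Fc v :=
    InnerProductSpace.toDual_symm_apply
  rw [h3]
  exact hφ v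

private lemma firm_resolvent {J : X → X} {A : Set (X × X)} (hm : MonotoneGraph A)
    (hJ : IsResolventOf J A) (a b : X) : ‖J a - J b‖ ^ 2 ≤ ⟪J a - J b, a - b⟫ := by
  have h := hm _ (hJ a).1 _ (hJ b).1
  simp only at h
  have e : (a - J a) - (b - J b) = (a - b) - (J a - J b) := by abel
  rw [e, inner_sub_right, real_inner_self_eq_norm_sq] at h
  linarith

private lemma nonexp_resolvent {J : X → X} {A : Set (X × X)} (hm : MonotoneGraph A)
    (hJ : IsResolventOf J A) (a b : X) : ‖J a - J b‖ ≤ ‖a - b‖ := by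
  have h1 := firm_resolvent hm hJ a b
  have h2 := real_inner_le_norm (J a - J b) (a - b)
  by_contra h
  push_neg at h
  nlinarith [norm_nonneg (a - b), norm_nonneg (J a - J b)]

private lemma firmT_aux (a b A1 A2 B1 B2 : X)
    (h1 : ‖A1 - A2‖ ^ 2 ≤ ⟪A1 - A2, a - b⟫)
    (h2 : ‖B1 - B2‖ ^ 2 ≤ ⟪B1 - B2, ((2:ℝ) • A1 - a) - ((2:ℝ) • A2 - b)⟫) :
    0 ≤ ⟪(B1 + (a - A1)) - (B2 + (b - A2)), (a - b) - ((B1 + (a - A1)) - (B2 + (b - A2)))⟫ := by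
  have e : ⟪(B1 + (a - A1)) - (B2 + (b - A2)), (a - b) - ((B1 + (a - A1)) - (B2 + (b - A2)))⟫
      = (⟪B1 - B2, ((2:ℝ) • A1 - a) - ((2:ℝ) • A2 - b)⟫ - ‖B1 - B2‖ ^ 2)
        + (⟪A1 - A2, a - b⟫ - ‖A1 - A2‖ ^ 2) := by
    simp only [← real_inner_self_eq_norm_sq, inner_sub_left, inner_sub_right, inner_add_left,
      inner_add_right, real_inner_smul_left, real_inner_smul_right,
      real_inner_comm b a, real_inner_comm A1 a, real_inner_comm A2 a, real_inner_comm B1 a,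
      real_inner_comm B2 a, real_inner_comm A1 b, real_inner_comm A2 b, real_inner_comm B1 b,
      real_inner_comm B2 b, real_inner_comm A2 A1, real_inner_comm B1 A1, real_inner_comm B2 A1,
      real_inner_comm B1 A2, real_inner_comm B2 A2, real_inner_comm B2 B1]
    ring
  rw [e]
  linarith

private lemma sum_alg (P Q E : X) :
    ⟪P, Q⟫ + ⟪P - E, E - Q⟫ = ⟪P, E⟫ + ⟪E, Q⟫ - ‖E‖ ^ 2 := by
  simp only [← real_inner_self_eq_norm_sq, inner_sub_left, inner_sub_right]
  ring

end H

theorem douglasRachford_shadow_sequence_weak_convergence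
    {X : Type*} [NormedAddCommGroup X] [InnerProductSpace ℝ X] [CompleteSpace X]
    (A B : Set (X × X))
    (hA : MaximalMonotoneGraph A) (hB : MaximalMonotoneGraph B)
    (JA JB : X → X) (hJA : IsResolventOf JA A) (hJB : IsResolventOf JB B)
    (hzer : ∃ x u : X, (x, u) ∈ A ∧ (x, -u) ∈ B)
    (T : X → X) (hT : T = fun w => JB ((2 : ℝ) • JA w - w) + (w - JA w))
    (z : ℕ → X) (hiter : ∀ n, z (n + 1) = T (z n)) :
    ∃ zl : X, T zl = zl ∧
      (∀ w : X, Tendsto (fun n => ⟪z n, w⟫) atTop (𝓝 ⟪zl, w⟫)) ∧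
      (∀ w : X, Tendsto (fun n => ⟪JA (z n), w⟫) atTop (𝓝 ⟪JA zl, w⟫)) ∧
      (∃ u : X, (JA zl, u) ∈ A ∧ (JA zl, -u) ∈ B) := by
  obtain ⟨x₀, u₀, hx₀A, hx₀B⟩ := hzer
  -- basic operator facts
  have firmT : ∀ a b : X, 0 ≤ ⟪T a - T b, (a - b) - (T a - T b)⟫ := by
    intro a b
    have h1 := firm_resolvent hA.1 hJA a b
    have h2 := firm_resolvent hB.1 hJB ((2:ℝ) • JA a - a) ((2:ℝ) • JA b - b)
    rw [hT]
    exact firmT_aux a b (JA a) (JA b) _ _ h1 h2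
  have fejer : ∀ a b : X, ‖T a - T b‖ ^ 2 + ‖(a - T a) - (b - T b)‖ ^ 2 ≤ ‖a - b‖ ^ 2 := by
    intro a b
    have h := firmT a b
    have e0 : a - b = (T a - T b) + ((a - b) - (T a - T b)) := by abel
    have e1 : ‖(T a - T b) + ((a - b) - (T a - T b))‖ ^ 2
        = ‖T a - T b‖ ^ 2 + 2 * ⟪T a - T b, (a - b) - (T a - T b)⟫
          + ‖(a - b) - (T a - T b)‖ ^ 2 := norm_add_sq_real _ _
    have e2 : (a - T a) - (b - T b) = (a - b) - (T a - T b) := by abel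
    have e3 : ‖a - b‖ ^ 2 = ‖(T a - T b) + ((a - b) - (T a - T b))‖ ^ 2 := by rw [← e0]
    rw [e2]
    rw [e1] at e3
    linarith
  have nonexpT : ∀ a b : X, ‖T a - T b‖ ≤ ‖a - b‖ := by
    intro a b
    have h := fejer a b
    have h2 : ‖T a - T b‖ ^ 2 ≤ ‖a - b‖ ^ 2 := by nlinarith [sq_nonneg ‖(a - T a) - (b - T b)‖]
    have := Real.sqrt_le_sqrt h2
    rwa [Real.sqrt_sq (norm_nonneg _), Real.sqrt_sq (norm_nonneg _)] at this
  -- fixed point zf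
  set zf : X := x₀ + u₀ with hzf
  have hJAzf : JA zf = x₀ := by
    refine ((hJA zf).2 x₀ ?_).symm
    rw [hzf, add_sub_cancel_left]
    exact hx₀A
  have hJBzf : JB ((2:ℝ) • x₀ - zf) = x₀ := by
    have harg : (2:ℝ) • x₀ - zf = x₀ - u₀ := by rw [hzf, two_smul]; abel
    rw [harg]
    refine ((hJB _).2 x₀ ?_).symm
    have : x₀ - u₀ - x₀ = -u₀ := by abel
    rw [this]
    exact hx₀B
  have hTzf : T zf = zf := by
    rw [hT]
    show JB ((2:ℝ) • JA zf - zf) + (zf - JA zf) = zf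
    rw [hJAzf, hJBzf]
    abel
  -- sequences
  set xs : ℕ → X := fun n => JA (z n) with hxdef
  set ys : ℕ → X := fun n => JB ((2:ℝ) • xs n - z n) with hydef
  set us : ℕ → X := fun n => z n - xs n with hudef
  set vs : ℕ → X := fun n => ((2:ℝ) • xs n - z n) - ys n with hvdef
  set es : ℕ → X := fun n => z n - z (n + 1) with hedef
  have hxA : ∀ n, (xs n, us n) ∈ A := fun n => (hJA (z n)).1
  have hyB : ∀ n, (ys n, vs n) ∈ B := fun n => (hJB _).1
  have hiterT : ∀ n, z (n + 1) = ys n + (z n - xs n) := by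
    intro n; rw [hiter n, hT]
  have hxy : ∀ n, xs n - ys n = es n := by
    intro n; rw [hedef]; simp only; rw [hiterT n]; abel
  have hy_e : ∀ n, ys n = xs n - es n := by
    intro n; rw [← hxy n]; abel
  have hv_eu : ∀ n, vs n = es n - us n := by
    intro n
    rw [hvdef]; simp only
    rw [← hxy n, hudef]; simp only
    rw [two_smul]; abel
  have heT : ∀ n, es n = z n - T (z n) := by
    intro n; rw [hedef]; simp only [hiter n]
  -- boundedness
  have hzb : ∀ n, ‖z n - zf‖ ≤ ‖z 0 - zf‖ := by
    intro n
    induction n with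
    | zero => exact le_rfl
    | succ n ih =>
      rw [hiter n]
      calc ‖T (z n) - zf‖ = ‖T (z n) - T zf‖ := by rw [hTzf]
        _ ≤ ‖z n - zf‖ := nonexpT _ _
        _ ≤ _ := ih
  set Cz : ℝ := ‖z 0 - zf‖ + ‖zf‖ with hCzdef
  have hCz : ∀ n, ‖z n‖ ≤ Cz := by
    intro n
    calc ‖z n‖ = ‖(z n - zf) + zf‖ := by rw [sub_add_cancel]
      _ ≤ ‖z n - zf‖ + ‖zf‖ := norm_add_le _ _
      _ ≤ Cz := by have := hzb n; rw [hCzdef]; linarith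
  set Cx : ℝ := ‖z 0 - zf‖ + ‖x₀‖ with hCxdef
  have hCx : ∀ n, ‖xs n‖ ≤ Cx := by
    intro n
    have h1 : ‖xs n - x₀‖ ≤ ‖z n - zf‖ := by
      rw [hxdef]; simp only
      rw [← hJAzf]
      exact nonexp_resolvent hA.1 hJA _ _
    calc ‖xs n‖ = ‖(xs n - x₀) + x₀‖ := by rw [sub_add_cancel]
      _ ≤ ‖xs n - x₀‖ + ‖x₀‖ := norm_add_le _ _
      _ ≤ Cx := by have := hzb n; rw [hCxdef]; linarith
  set Cu : ℝ := Cz + Cx with hCudef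
  have hCu : ∀ n, ‖us n‖ ≤ Cu := by
    intro n
    calc ‖us n‖ ≤ ‖z n‖ + ‖xs n‖ := norm_sub_le _ _
      _ ≤ Cu := add_le_add (hCz n) (hCx n)
  have hCe : ∀ n, ‖es n‖ ≤ Cz + Cz := by
    intro n
    calc ‖es n‖ ≤ ‖z n‖ + ‖z (n+1)‖ := norm_sub_le _ _
      _ ≤ Cz + Cz := add_le_add (hCz n) (hCz (n+1))
  -- convergence of distances to fixed points
  have hdist : ∀ f : X, T f = f →
      Tendsto (fun n => ‖z n - f‖ ^ 2) atTop (𝓝 (⨅ n, ‖z n - f‖ ^ 2)) := by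
    intro f hf
    apply tendsto_atTop_ciInf
    · apply antitone_nat_of_succ_le
      intro n
      have h1 : ‖z (n+1) - f‖ ≤ ‖z n - f‖ := by
        rw [hiter n]
        calc ‖T (z n) - f‖ = ‖T (z n) - T f‖ := by rw [hf]
          _ ≤ ‖z n - f‖ := nonexpT _ _
      exact pow_le_pow_left₀ (norm_nonneg _) h1 2
    · exact ⟨0, by rintro r ⟨n, rfl⟩; positivity⟩
  -- es → 0
  have hfe : ∀ n, ‖z (n+1) - zf‖ ^ 2 + ‖es n‖ ^ 2 ≤ ‖z n - zf‖ ^ 2 := by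
    intro n
    have h := fejer (z n) zf
    rw [hTzf, sub_self, sub_zero, ← heT n, ← hiter n] at h
    exact h
  have hE2 : Tendsto (fun n => ‖es n‖ ^ 2) atTop (𝓝 0) := by
    have hd := hdist zf hTzf
    have hshift : Tendsto (fun n => ‖z (n+1) - zf‖ ^ 2) atTop (𝓝 (⨅ n, ‖z n - zf‖ ^ 2)) := by
      have := hd.comp (tendsto_add_atTop_nat 1)
      exact this
    have hdiff : Tendsto (fun n => ‖z n - zf‖ ^ 2 - ‖z (n+1) - zf‖ ^ 2) atTop (𝓝 0) := by
      simpa using hd.sub hshift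
    exact squeeze_zero (fun n => sq_nonneg _) (fun n => by linarith [hfe n]) hdiff
  have hE : Tendsto (fun n => ‖es n‖) atTop (𝓝 0) := by
    have h := (Real.continuous_sqrt.tendsto 0).comp hE2
    simp only [Function.comp_def] at h
    rw [Real.sqrt_zero] at h
    refine h.congr fun n => ?_
    exact Real.sqrt_sq (norm_nonneg _)
  -- small inner product helpers
  have hesmall : ∀ v : X, Tendsto (fun n => ⟪es n, v⟫) atTop (𝓝 0) := by
    intro v
    apply squeeze_zero_norm (a := fun n => ‖es n‖ * ‖v‖)
    · intro n
      simpa [Real.norm_eq_abs] using abs_real_inner_le_norm (es n) v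
    · simpa using hE.mul_const ‖v‖
  have hsmall2 : ∀ (w : ℕ → X) (Cw : ℝ), (∀ n, ‖w n‖ ≤ Cw) →
      Tendsto (fun n => ⟪w n, es n⟫) atTop (𝓝 0) := by
    intro w Cw hCw
    apply squeeze_zero_norm (a := fun n => Cw * ‖es n‖)
    · intro n
      refine le_trans ?_ (mul_le_mul_of_nonneg_right (hCw n) (norm_nonneg _))
      simpa [Real.norm_eq_abs] using abs_real_inner_le_norm (w n) (es n)
    · simpa using hE.const_mul Cw
  -- cluster points are fixed points
  have hfixcluster : ∀ (G : Ultrafilter ℕ), (G : Filter ℕ) ≤ atTop → ∀ p : X,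
      (∀ v, Tendsto (fun n => ⟪z n, v⟫) (G : Filter ℕ) (𝓝 ⟪p, v⟫)) → T p = p := by
    intro G hG p hp
    set w : X := p - T p with hw
    have hkey : ∀ n, 2 * ⟪z n, w⟫ - 2 * ⟪p, w⟫ + ‖w‖ ^ 2
        ≤ 2 * ‖es n‖ * (Cz + ‖p‖) + ‖es n‖ ^ 2 := by
      intro n
      have e1 : ‖z n - T p‖ ^ 2 = ‖z n - p‖ ^ 2 + 2 * ⟪z n - p, w⟫ + ‖w‖ ^ 2 := by
        have e0 : z n - T p = (z n - p) + w := by rw [hw]; abel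
        rw [e0]; exact norm_add_sq_real _ _
      have e2 : ‖z n - T p‖ ≤ ‖es n‖ + ‖z n - p‖ := by
        have e0 : z n - T p = (z n - T (z n)) + (T (z n) - T p) := by abel
        rw [e0]
        refine (norm_add_le _ _).trans ?_
        exact add_le_add (le_of_eq (by rw [heT n])) (nonexpT _ _)
      have e3 : ‖z n - T p‖ ^ 2 ≤ (‖es n‖ + ‖z n - p‖) ^ 2 :=
        pow_le_pow_left₀ (norm_nonneg _) e2 2
      have e4 : ‖z n - p‖ ≤ Cz + ‖p‖ :=
        (norm_sub_le _ _).trans (add_le_add (hCz n) le_rfl)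
      have e5 : ⟪z n - p, w⟫ = ⟪z n, w⟫ - ⟪p, w⟫ := inner_sub_left _ _ _
      have e6 : ‖es n‖ * ‖z n - p‖ ≤ ‖es n‖ * (Cz + ‖p‖) :=
        mul_le_mul_of_nonneg_left e4 (norm_nonneg _)
      have e7 : (‖es n‖ + ‖z n - p‖) ^ 2
          = ‖es n‖ ^ 2 + 2 * (‖es n‖ * ‖z n - p‖) + ‖z n - p‖ ^ 2 := by ring
      rw [e5] at e1
      linarith
    have hlhs : Tendsto (fun n => 2 * ⟪z n, w⟫ - 2 * ⟪p, w⟫ + ‖w‖ ^ 2) (G : Filter ℕ)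
        (𝓝 (‖w‖ ^ 2)) := by
      have h1 := ((hp w).const_mul 2).sub_const (2 * ⟪p, w⟫)
      have h2 := h1.add_const (‖w‖ ^ 2)
      simpa using h2
    have hrhs : Tendsto (fun n => 2 * ‖es n‖ * (Cz + ‖p‖) + ‖es n‖ ^ 2) (G : Filter ℕ)
        (𝓝 0) := by
      have h1 : Tendsto (fun n => 2 * ‖es n‖ * (Cz + ‖p‖) + ‖es n‖ ^ 2) atTop (𝓝 0) := by
        have h2 := ((hE.const_mul 2).mul_const (Cz + ‖p‖)).add (hE.mul hE)
        simp only [mul_zero, zero_mul, add_zero, zero_add] at h2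
        refine h2.congr fun n => ?_
        ring
      exact h1.mono_left hG
    have hle : ‖w‖ ^ 2 ≤ 0 :=
      le_of_tendsto_of_tendsto' hlhs hrhs hkey
    have hw0 : w = 0 := by
      have : ‖w‖ ^ 2 = 0 := le_antisymm hle (sq_nonneg _)
      have h2 : ‖w‖ = 0 := by
        exact pow_eq_zero_iff (n := 2) (by norm_num) |>.mp this
      exact norm_eq_zero.mp h2
    have := sub_eq_zero.mp (hw ▸ hw0)
    exact this.symm
  -- weak limit of z along some ultrafilter
  obtain ⟨G0, hG0⟩ := Ultrafilter.exists_le (atTop : Filter ℕ)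
  obtain ⟨zl, hzl⟩ := ultrafilter_weak_limit G0 z Cz hCz
  have hTzl : T zl = zl := hfixcluster G0 hG0 zl hzl
  -- Opial uniqueness
  have huniq : ∀ (G : Ultrafilter ℕ), (G : Filter ℕ) ≤ atTop → ∀ p : X,
      (∀ v, Tendsto (fun n => ⟪z n, v⟫) (G : Filter ℕ) (𝓝 ⟪p, v⟫)) → p = zl := by
    intro G hG p hp
    have hTp := hfixcluster G hG p hp
    have hdl := hdist zl hTzl
    have hdp := hdist p hTp
    set m : ℝ := ((⨅ n, ‖z n - zl‖ ^ 2) - (⨅ n, ‖z n - p‖ ^ 2) - ‖zl‖ ^ 2 + ‖p‖ ^ 2) / 2 with hm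
    have hμ : Tendsto (fun n => ⟪z n, p⟫ - ⟪z n, zl⟫) atTop (𝓝 m) := by
      have h1 := ((hdl.sub hdp).sub_const (‖zl‖ ^ 2)).add_const (‖p‖ ^ 2)
      have h2 := h1.div_const 2
      refine h2.congr fun n => ?_
      rw [norm_sub_sq_real, norm_sub_sq_real]
      ring
    have e1 : ⟪p, p⟫ - ⟪p, zl⟫ = m :=
      tendsto_nhds_unique ((hp p).sub (hp zl)) (hμ.mono_left hG)
    have e2 : ⟪zl, p⟫ - ⟪zl, zl⟫ = m :=
      tendsto_nhds_unique ((hzl p).sub (hzl zl)) (hμ.mono_left hG0)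
    have e3 : ‖p - zl‖ ^ 2 = 0 := by
      rw [norm_sub_sq_real]
      rw [← real_inner_self_eq_norm_sq, ← real_inner_self_eq_norm_sq]
      have e4 : ⟪p, zl⟫ = ⟪zl, p⟫ := real_inner_comm _ _
      linarith
    have : ‖p - zl‖ = 0 := pow_eq_zero_iff (n := 2) (by norm_num) |>.mp e3
    exact sub_eq_zero.mp (norm_eq_zero.mp this)
  have htendz : ∀ v : X, Tendsto (fun n => ⟪z n, v⟫) atTop (𝓝 ⟪zl, v⟫) := by
    intro v
    rw [tendsto_iff_ultrafilter]
    intro G hG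
    obtain ⟨p, hp⟩ := ultrafilter_weak_limit G z Cz hCz
    have := huniq G hG p hp
    rw [← this]
    exact hp v
  -- the fixed point zl data
  set xl : X := JA zl with hxl
  set ul : X := zl - xl with hul
  have hxuA : (xl, ul) ∈ A := by
    rw [hxl, hul, hxl]
    exact (hJA zl).1
  have hJBzl : JB ((2:ℝ) • xl - zl) = xl := by
    have h := hTzl
    rw [hT] at h
    simp only at h
    rw [← hxl] at h
    have h2 : JB ((2:ℝ) • xl - zl) = zl - (zl - xl) := eq_sub_of_add_eq h
    rw [h2, sub_sub_cancel]
  have hxuB : (xl, -ul) ∈ B := by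
    have h := (hJB ((2:ℝ) • xl - zl)).1
    rw [hJBzl] at h
    have e : (2:ℝ) • xl - zl - xl = -ul := by rw [hul, two_smul]; abel
    rw [e] at h
    exact h
  -- alpha tends to zero
  have hα0 : Tendsto (fun n => ⟪xs n - xl, us n - ul⟫) atTop (𝓝 0) := by
    have hαnn : ∀ n, 0 ≤ ⟪xs n - xl, us n - ul⟫ := fun n => hA.1 _ (hxA n) _ hxuA
    have hβnn : ∀ n, 0 ≤ ⟪ys n - xl, vs n - -ul⟫ := fun n => hB.1 _ (hyB n) _ hxuB
    have hub : ∀ n, ⟪xs n - xl, us n - ul⟫ ≤ (Cx + ‖xl‖ + (Cu + ‖ul‖)) * ‖es n‖ := by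
      intro n
      have hsum_eq : ⟪xs n - xl, us n - ul⟫ + ⟪ys n - xl, vs n - -ul⟫
          = ⟪xs n - xl, es n⟫ + ⟪es n, us n - ul⟫ - ‖es n‖ ^ 2 := by
        have va : ys n - xl = (xs n - xl) - es n := by rw [hy_e n]; abel
        have vb : vs n - -ul = es n - (us n - ul) := by rw [hv_eu n]; abel
        rw [va, vb]
        exact sum_alg _ _ _
      have b1 : ⟪xs n - xl, es n⟫ ≤ (Cx + ‖xl‖) * ‖es n‖ := by
        refine (real_inner_le_norm _ _).trans ?_
        refine mul_le_mul_of_nonneg_right ?_ (norm_nonneg _)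
        exact (norm_sub_le _ _).trans (add_le_add (hCx n) le_rfl)
      have b2 : ⟪es n, us n - ul⟫ ≤ (Cu + ‖ul‖) * ‖es n‖ := by
        refine (real_inner_le_norm _ _).trans ?_
        rw [mul_comm]
        refine mul_le_mul_of_nonneg_right ?_ (norm_nonneg (es n))
        exact (norm_sub_le _ _).trans (add_le_add (hCu n) le_rfl)
      have := hβnn n
      nlinarith [sq_nonneg ‖es n‖]
    have hg : Tendsto (fun n => (Cx + ‖xl‖ + (Cu + ‖ul‖)) * ‖es n‖) atTop (𝓝 0) := by
      simpa using hE.const_mul (Cx + ‖xl‖ + (Cu + ‖ul‖))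
    exact squeeze_zero hαnn hub hg
  -- the shadow limit along every ultrafilter
  have hshadow : ∀ (G : Ultrafilter ℕ), (G : Filter ℕ) ≤ atTop →
      ∀ v : X, Tendsto (fun n => ⟪xs n, v⟫) (G : Filter ℕ) (𝓝 ⟪xl, v⟫) := by
    intro G hG
    obtain ⟨c, hc⟩ := ultrafilter_weak_limit G xs Cx hCx
    suffices hcx : c = xl by
      intro v; rw [← hcx]; exact hc v
    have hzG : ∀ v, Tendsto (fun n => ⟪z n, v⟫) (G : Filter ℕ) (𝓝 ⟪zl, v⟫) :=
      fun v => (htendz v).mono_left hG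
    have huG : ∀ v : X, Tendsto (fun n => ⟪us n, v⟫) (G : Filter ℕ) (𝓝 ⟪zl - c, v⟫) := by
      intro v
      have h := (hzG v).sub (hc v)
      have e2 : ⟪zl, v⟫ - ⟪c, v⟫ = ⟪zl - c, v⟫ := (inner_sub_left _ _ _).symm
      rw [e2] at h
      refine h.congr fun n => ?_
      rw [hudef]
      simp only
      rw [inner_sub_left (z n) (xs n) v]
    have hyG : ∀ v : X, Tendsto (fun n => ⟪ys n, v⟫) (G : Filter ℕ) (𝓝 ⟪c, v⟫) := by
      intro v
      have h := (hc v).sub ((hesmall v).mono_left hG)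
      rw [sub_zero] at h
      refine h.congr fun n => ?_
      rw [hy_e n, inner_sub_left (xs n) (es n) v]
    have hvG : ∀ v : X, Tendsto (fun n => ⟪vs n, v⟫) (G : Filter ℕ) (𝓝 ⟪c - zl, v⟫) := by
      intro v
      have h := ((hesmall v).mono_left hG).sub (huG v)
      rw [zero_sub] at h
      have e : -⟪zl - c, v⟫ = ⟪c - zl, v⟫ := by rw [← inner_neg_left, neg_sub]
      rw [e] at h
      refine h.congr fun n => ?_
      rw [hv_eu n, inner_sub_left (es n) (us n) v]
    set L : ℝ := ⟪c, ul⟫ + ⟪zl - c, xl⟫ - ⟪xl, ul⟫ with hLdef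
    have hkey : L - ⟪c, zl - c⟫ = ‖c - xl‖ ^ 2 := by
      rw [hLdef, hul, norm_sub_sq_real]
      simp only [inner_sub_left, inner_sub_right, ← real_inner_self_eq_norm_sq,
        real_inner_comm zl xl, real_inner_comm xl c]
      ring
    have hsG : Tendsto (fun n => ⟪xs n, us n⟫) (G : Filter ℕ) (𝓝 L) := by
      have hid : ∀ n, ⟪xs n - xl, us n - ul⟫ + ⟪xs n, ul⟫ + ⟪us n, xl⟫ - ⟪xl, ul⟫
          = ⟪xs n, us n⟫ := by
        intro n
        simp only [inner_sub_left, inner_sub_right, real_inner_comm (us n) xl]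
        ring
      have h := (((hα0.mono_left hG).add (hc ul)).add (huG xl)).sub_const ⟪xl, ul⟫
      have hLv : 0 + ⟪c, ul⟫ + ⟪zl - c, xl⟫ - ⟪xl, ul⟫ = L := by rw [hLdef]; ring
      rw [hLv] at h
      exact h.congr hid
    have hyvG : Tendsto (fun n => ⟪ys n, vs n⟫) (G : Filter ℕ) (𝓝 (-L)) := by
      have h := ((((hsmall2 xs Cx hCx).mono_left hG).sub hsG).sub
        ((hsmall2 es (Cz + Cz) hCe).mono_left hG)).add ((hsmall2 us Cu hCu).mono_left hG)
      have hLv : 0 - L - 0 + 0 = -L := by ring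
      rw [hLv] at h
      refine h.congr fun n => ?_
      rw [hy_e n, hv_eu n]
      simp only [inner_sub_left, inner_sub_right, real_inner_comm (es n) (us n)]
      ring
    have hBlim : ∀ q ∈ B, 0 ≤ ⟪c - q.1, (c - zl) - q.2⟫ := by
      intro q hq
      have hnn : ∀ n, 0 ≤ ⟪ys n - q.1, vs n - q.2⟫ := fun n => hB.1 _ (hyB n) _ hq
      have htend : Tendsto (fun n => ⟪ys n - q.1, vs n - q.2⟫) (G : Filter ℕ)
          (𝓝 (-L - ⟪c, q.2⟫ - ⟪c - zl, q.1⟫ + ⟪q.1, q.2⟫)) := by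
        have h := ((hyvG.sub (hyG q.2)).sub (hvG q.1)).add_const ⟪q.1, q.2⟫
        refine h.congr fun n => ?_
        simp only [inner_sub_left, inner_sub_right, real_inner_comm (vs n) q.1]
        ring
      have h1 : 0 ≤ -L - ⟪c, q.2⟫ - ⟪c - zl, q.1⟫ + ⟪q.1, q.2⟫ := ge_of_tendsto' htend hnn
      have e : ⟪c - q.1, (c - zl) - q.2⟫
          = (-L - ⟪c, q.2⟫ - ⟪c - zl, q.1⟫ + ⟪q.1, q.2⟫) + (L - ⟪c, zl - c⟫) := by
        simp only [inner_sub_left, inner_sub_right, real_inner_comm q.1 c,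
          real_inner_comm q.1 zl]
        ring
      rw [e, hkey]
      exact add_nonneg h1 (sq_nonneg _)
    have hcB : (c, c - zl) ∈ B := by
      have hmono : MonotoneGraph (insert (c, c - zl) B) := by
        rintro p hp q hq
        rcases Set.mem_insert_iff.mp hp with hp1 | hp1 <;>
          rcases Set.mem_insert_iff.mp hq with hq1 | hq1
        · rw [hp1, hq1]; simp
        · rw [hp1]
          exact hBlim q hq1
        · rw [hq1]
          have h := hBlim p hp1
          have e : ⟪p.1 - (c, c - zl).1, p.2 - (c, c - zl).2⟫
              = ⟪(c, c - zl).1 - p.1, (c, c - zl).2 - p.2⟫ := by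
            rw [← inner_neg_neg, neg_sub, neg_sub]
          rw [e]
          exact h
        · exact hB.1 p hp1 q hq1
      have := hB.2 _ hmono (Set.subset_insert _ _)
      rw [← this]
      exact Set.mem_insert _ _
    have hnn2 : ∀ n, 0 ≤ ⟪ys n - c, vs n - (c - zl)⟫ := fun n => hB.1 _ (hyB n) _ hcB
    have htend2 : Tendsto (fun n => ⟪ys n - c, vs n - (c - zl)⟫) (G : Filter ℕ)
        (𝓝 (-(‖c - xl‖ ^ 2))) := by
      have h := ((hyvG.sub (hyG (c - zl))).sub (hvG c)).add_const ⟪c, c - zl⟫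
      have e : -L - ⟪c, c - zl⟫ - ⟪c - zl, c⟫ + ⟪c, c - zl⟫ = -(L - ⟪c, zl - c⟫) := by
        simp only [inner_sub_left, inner_sub_right, real_inner_comm zl c]
        ring
      rw [hkey] at e
      rw [e] at h
      refine h.congr fun n => ?_
      simp only [inner_sub_left, inner_sub_right, real_inner_comm (vs n) c]
      ring
    have hle2 : (0:ℝ) ≤ -(‖c - xl‖ ^ 2) := ge_of_tendsto' htend2 hnn2
    have h0 : ‖c - xl‖ ^ 2 = 0 := le_antisymm (by linarith) (sq_nonneg _)
    have h2 : ‖c - xl‖ = 0 := pow_eq_zero_iff (n := 2) (by norm_num) |>.mp h0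
    exact sub_eq_zero.mp (norm_eq_zero.mp h2)
  -- conclusion
  refine ⟨zl, hTzl, htendz, ?_, ⟨zl - JA zl, (hJA zl).1, ?_⟩⟩
  · intro v
    rw [tendsto_iff_ultrafilter]
    intro G hG
    exact hshadow G hG v
  · exact hxuB
end

section
/- (Zarantonello's example.) Let X = ℓ²(ℕ), let C = {x ∈ X : ‖x‖ ≤ 1} be the closed unit ball, let (e_n)_{n∈ℕ} be the standard unit vectors, and set z_n = e_0 + e_n for each n ∈ ℕ. Then z_n converges weakly to e_0, while P_C z_n converges weakly to (1/√2) e_0, which is different from P_C e_0 = e_0. In particular, the metric projection P_C is not sequentially weakly continuous. -/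
open Filter Topology RealInnerProductSpace

/-- The real Hilbert space `ℓ²(ℕ)`. -/
noncomputable abbrev ellTwo : Type := lp (fun _ : ℕ => ℝ) 2

/-- The standard unit vectors of `ℓ²(ℕ)`. -/
noncomputable def stdVec (n : ℕ) : ellTwo := lp.single 2 n (1 : ℝ)

/-- The metric projection onto the closed unit ball of `ℓ²(ℕ)`. -/
noncomputable def ballProj (x : ellTwo) : ellTwo :=
  if ‖x‖ ≤ 1 then x else ‖x‖⁻¹ • x

lemma inner_stdVec (n : ℕ) (w : ellTwo) : ⟪stdVec n, w⟫ = (w : ℕ → ℝ) n := by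
  simp [stdVec, lp.inner_single_left]

lemma stdVec_apply (n m : ℕ) : (stdVec n : ℕ → ℝ) m = if n = m then 1 else 0 := by
  simp [stdVec, lp.single_apply, Pi.single_apply, eq_comm]

lemma norm_stdVec (n : ℕ) : ‖stdVec n‖ = 1 := by
  have := lp.norm_single (p := 2) (E := fun _ : ℕ => ℝ) (by norm_num) n (1:ℝ)
  simpa [stdVec] using this

lemma coord_tendsto (w : ellTwo) : Tendsto (fun n => (w : ℕ → ℝ) n) atTop (𝓝 0) := by
  have h := lp.memℓp w
  have hs : Summable (fun n => ‖(w : ℕ → ℝ) n‖ ^ (2:ℝ)) := h.summable (by norm_num)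
  have h1 := hs.tendsto_atTop_zero
  have h2 : Tendsto (fun n => Real.sqrt (‖(w : ℕ → ℝ) n‖ ^ (2:ℝ))) atTop (𝓝 (Real.sqrt 0)) :=
    h1.sqrt
  have h3 : ∀ n, Real.sqrt (‖(w : ℕ → ℝ) n‖ ^ (2:ℝ)) = ‖(w : ℕ → ℝ) n‖ := fun n => by
    rw [show ((2:ℝ)) = ((2:ℕ):ℝ) by norm_num, Real.rpow_natCast,
      Real.sqrt_sq (norm_nonneg _)]
  have h4 : Tendsto (fun n => ‖(w : ℕ → ℝ) n‖) atTop (𝓝 0) := by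
    simpa using h2.congr h3
  exact tendsto_zero_iff_norm_tendsto_zero.mpr h4

lemma one_lt_sqrt_two : (1:ℝ) < Real.sqrt 2 := by
  rw [show (1:ℝ) = Real.sqrt 1 by simp]
  exact Real.sqrt_lt_sqrt (by norm_num) (by norm_num)

lemma norm_z (n : ℕ) (hn : n ≠ 0) : ‖stdVec 0 + stdVec n‖ = Real.sqrt 2 := by
  have hin : ⟪stdVec 0 + stdVec n, stdVec 0 + stdVec n⟫ = (2:ℝ) := by
    rw [real_inner_add_add_self]
    rw [show ⟪stdVec 0, stdVec n⟫ = (0:ℝ) by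
      rw [inner_stdVec, stdVec_apply]; simp [hn]]
    rw [real_inner_self_eq_norm_mul_norm, real_inner_self_eq_norm_mul_norm,
      norm_stdVec, norm_stdVec]
    ring
  have h7 := real_inner_self_eq_norm_mul_norm (stdVec 0 + stdVec n)
  rw [hin] at h7
  rw [← Real.sqrt_mul_self (norm_nonneg (stdVec 0 + stdVec n)), ← h7]

theorem zarantonello_example
    (C : Set ellTwo) (hC : C = {x : ellTwo | ‖x‖ ≤ 1})
    (z : ℕ → ellTwo) (hz : ∀ n, z n = stdVec 0 + stdVec n) :
    (∀ w : ellTwo, Tendsto (fun n => ⟪z n, w⟫) atTop (𝓝 ⟪stdVec 0, w⟫)) ∧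
    (∀ w : ellTwo, Tendsto (fun n => ⟪ballProj (z n), w⟫) atTop
      (𝓝 ⟪(Real.sqrt 2)⁻¹ • stdVec 0, w⟫)) ∧
    ballProj (stdVec 0) = stdVec 0 ∧
    (Real.sqrt 2)⁻¹ • stdVec 0 ≠ stdVec 0 ∧
    ¬ (∀ (x : ℕ → ellTwo) (p : ellTwo),
        (∀ w : ellTwo, Tendsto (fun n => ⟪x n, w⟫) atTop (𝓝 ⟪p, w⟫)) →
        (∀ w : ellTwo,
          Tendsto (fun n => ⟪ballProj (x n), w⟫) atTop (𝓝 ⟪ballProj p, w⟫))) := by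
  have hproj : ∀ n, n ≠ 0 → ballProj (z n) = (Real.sqrt 2)⁻¹ • z n := by
    intro n hn
    have hnorm : ‖z n‖ = Real.sqrt 2 := by rw [hz n]; exact norm_z n hn
    rw [ballProj, if_neg (by rw [hnorm]; exact not_le.mpr one_lt_sqrt_two), hnorm]
  have hweak : ∀ w : ellTwo, Tendsto (fun n => ⟪z n, w⟫) atTop (𝓝 ⟪stdVec 0, w⟫) := by
    intro w
    have : ∀ n, ⟪z n, w⟫ = (w : ℕ → ℝ) 0 + (w : ℕ → ℝ) n := by
      intro n; rw [hz n, inner_add_left, inner_stdVec, inner_stdVec]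
    rw [show ⟪stdVec 0, w⟫ = (w : ℕ → ℝ) 0 + 0 by rw [inner_stdVec]; ring]
    exact (tendsto_const_nhds.add (coord_tendsto w)).congr (fun n => (this n).symm)
  have hweak2 : ∀ w : ellTwo, Tendsto (fun n => ⟪ballProj (z n), w⟫) atTop
      (𝓝 ⟪(Real.sqrt 2)⁻¹ • stdVec 0, w⟫) := by
    intro w
    have hlim : ⟪(Real.sqrt 2)⁻¹ • stdVec 0, w⟫ =
        (Real.sqrt 2)⁻¹ * ((w : ℕ → ℝ) 0 + 0) := by
      rw [real_inner_smul_left, inner_stdVec]; ring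
    rw [hlim]
    have base : Tendsto (fun n => (Real.sqrt 2)⁻¹ * ((w : ℕ → ℝ) 0 + (w : ℕ → ℝ) n))
        atTop (𝓝 ((Real.sqrt 2)⁻¹ * ((w : ℕ → ℝ) 0 + 0))) :=
      (tendsto_const_nhds.add (coord_tendsto w)).const_mul _
    refine base.congr' ?_
    filter_upwards [eventually_ge_atTop 1] with n hn
    have hn0 : n ≠ 0 := Nat.one_le_iff_ne_zero.mp hn
    rw [hproj n hn0, real_inner_smul_left, hz n, inner_add_left, inner_stdVec, inner_stdVec]
  have hfix : ballProj (stdVec 0) = stdVec 0 := by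
    rw [ballProj, if_pos (by rw [norm_stdVec])]
  have hne : (Real.sqrt 2)⁻¹ • stdVec 0 ≠ stdVec 0 := by
    intro h
    have := congrArg norm h
    rw [norm_smul, norm_stdVec, Real.norm_eq_abs, mul_one,
      abs_of_pos (inv_pos.mpr (by positivity))] at this
    have h1 : Real.sqrt 2 = 1 := by
      field_simp at this
      linarith [this]
    linarith [one_lt_sqrt_two, h1.le]
  refine ⟨hweak, hweak2, hfix, hne, ?_⟩
  intro H
  have h1 := H z (stdVec 0) hweak (stdVec 0)
  rw [hfix] at h1
  have h2 := hweak2 (stdVec 0)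
  have h3 := tendsto_nhds_unique h2 h1
  have h4 : ⟪(Real.sqrt 2)⁻¹ • stdVec 0, stdVec 0⟫ = (Real.sqrt 2)⁻¹ := by
    rw [real_inner_smul_left, inner_stdVec, stdVec_apply]; simp
  have h5 : ⟪stdVec 0, stdVec 0⟫ = (1:ℝ) := by
    rw [inner_stdVec, stdVec_apply]; simp
  rw [h4, h5] at h3
  have : Real.sqrt 2 = 1 := by
    have h6 : Real.sqrt 2 ≠ 0 := by positivity
    field_simp at h3
    linarith
  linarith [one_lt_sqrt_two]
end
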